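/- (i) For every K ∈ 𝒜_ℒ⁰, the map B ↦ π^p_*(B|K) is a totally monotone capacity on 𝒜_ℒ. (ii) For every F ∈ 𝒜_ℒ and K ∈ 𝒜_ℒ⁰: π^p_*(F|K) = 1 if F ∩ K = K; if F ∩ K ≠ K, then π^p_*(F|K) = π(F ∩ K)/π(K) when π(K) > 0, and π^p_*(F|K) = 0 when π(K) = 0. -/

import Mathlib

open Set

open scoped Classical

variable {Ω : Type*}

/-- A field of sets on `Ω`: contains `univ`, closed under complements and finite unions. -/
def IsSetField (𝒜 : Set (Set Ω)) : Prop :=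
  Set.univ ∈ 𝒜 ∧ (∀ A ∈ 𝒜, Aᶜ ∈ 𝒜) ∧ ∀ A ∈ 𝒜, ∀ B ∈ 𝒜, A ∪ B ∈ 𝒜

/-- A finitely additive probability on the field `𝒜`. -/
def IsFAP (𝒜 : Set (Set Ω)) (P : Set Ω → ℝ) : Prop :=
  (∀ A ∈ 𝒜, 0 ≤ P A ∧ P A ≤ 1) ∧ P Set.univ = 1 ∧
    ∀ A ∈ 𝒜, ∀ B ∈ 𝒜, Disjoint A B → P (A ∪ B) = P A + P B

/-- A partition of `Ω` into nonempty pairwise disjoint pieces. -/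
def IsPartition {ι : Type*} (H : ι → Set Ω) : Prop :=
  (∀ i, (H i).Nonempty) ∧ (Pairwise fun i j => Disjoint (H i) (H j)) ∧
    (⋃ i, H i) = Set.univ

/-- A field containing every member of the partition `H` and whose members are
unions of members of the partition. -/
def IsFieldOver {ι : Type*} (H : ι → Set Ω) (𝒜L : Set (Set Ω)) : Prop :=
  IsSetField 𝒜L ∧ (∀ i, H i ∈ 𝒜L) ∧ ∀ A ∈ 𝒜L, ∃ S : Set ι, A = ⋃ i ∈ S, H i

/-- A field containing `𝒜L ∪ 𝒜E` whose members are unions of the atoms `H i ∩ E j`. -/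
def IsJointField {ι κ : Type*} (H : ι → Set Ω) (E : κ → Set Ω)
    (𝒜L 𝒜E 𝒜 : Set (Set Ω)) : Prop :=
  IsSetField 𝒜 ∧ 𝒜L ⊆ 𝒜 ∧ 𝒜E ⊆ 𝒜 ∧
    ∀ A ∈ 𝒜, ∃ S : Set (ι × κ), A = ⋃ p ∈ S, H p.1 ∩ E p.2

/-- A strategy on `𝒜 × ℒ`: each `σ (·|H i)` is a finitely additive probability on `𝒜`
equal to `1` on events implied by `H i`. -/
def IsStrategy {ι : Type*} (𝒜 : Set (Set Ω)) (H : ι → Set Ω) (σ : Set Ω → ι → ℝ) : Prop :=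
  ∀ i, IsFAP 𝒜 (fun F => σ F i) ∧ ∀ F ∈ 𝒜, H i ⊆ F → σ F i = 1

/-- A full conditional probability on the field `𝒜` (conditions (C1), (C2), (C3)). -/
def IsFCP (𝒜 : Set (Set Ω)) (P : Set Ω → Set Ω → ℝ) : Prop :=
  (∀ E ∈ 𝒜, ∀ K ∈ 𝒜, K.Nonempty → P E K = P (E ∩ K) K) ∧
  (∀ K ∈ 𝒜, K.Nonempty → IsFAP 𝒜 fun E => P E K) ∧
  ∀ E ∈ 𝒜, ∀ F ∈ 𝒜, ∀ K ∈ 𝒜, K.Nonempty → (E ∩ K).Nonempty →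
    P (E ∩ F) K = P E K * P F (E ∩ K)

/-- `P` extends the prior `π` on `𝒜L` and the strategy `σ` on `𝒜 × ℒ`. -/
def ExtendsPriorStrategy {ι : Type*} (𝒜 𝒜L : Set (Set Ω)) (H : ι → Set Ω)
    (π : Set Ω → ℝ) (σ : Set Ω → ι → ℝ) (P : Set Ω → Set Ω → ℝ) : Prop :=
  (∀ B ∈ 𝒜L, P B Set.univ = π B) ∧ ∀ F ∈ 𝒜, ∀ i, P F (H i) = σ F i

/-- The set `𝒫` of full conditional probabilities on `𝒜` extending `{π, σ}`. -/
def FCPSet {ι : Type*} (𝒜 𝒜L : Set (Set Ω)) (H : ι → Set Ω)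
    (π : Set Ω → ℝ) (σ : Set Ω → ι → ℝ) : Set (Set Ω → Set Ω → ℝ) :=
  {P | IsFCP 𝒜 P ∧ ExtendsPriorStrategy 𝒜 𝒜L H π σ P}

/-- Lower envelope of a set of conditional probabilities at `F|K`. -/
noncomputable def lowEnv (Ps : Set (Set Ω → Set Ω → ℝ)) (F K : Set Ω) : ℝ :=
  sInf ((fun P => P F K) '' Ps)

/-- Upper envelope of a set of conditional probabilities at `F|K`. -/
noncomputable def upEnv (Ps : Set (Set Ω → Set Ω → ℝ)) (F K : Set Ω) : ℝ :=
  sSup ((fun P => P F K) '' Ps)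

/-- A finite partition of `Ω` contained in `𝒜L`. -/
def IsFinPart (𝒜L : Set (Set Ω)) (T : Finset (Set Ω)) : Prop :=
  (↑T : Set (Set Ω)) ⊆ 𝒜L ∧ (∀ A ∈ T, (A : Set Ω).Nonempty) ∧
    (∀ A ∈ T, ∀ B ∈ T, A ≠ B → Disjoint A B) ∧ ⋃₀ (↑T : Set (Set Ω)) = Set.univ

/-- Lower Stieltjes integral of `X : ℒ → ℝ` with respect to `μ` on `𝒜L`. -/
noncomputable def lowerSInt {ι : Type*} (H : ι → Set Ω) (𝒜L : Set (Set Ω))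
    (X : ι → ℝ) (μ : Set Ω → ℝ) : ℝ :=
  sSup {x | ∃ T : Finset (Set Ω), IsFinPart 𝒜L T ∧
    x = ∑ A ∈ T, sInf {y | ∃ i, H i ⊆ A ∧ y = X i} * μ A}

/-- Upper Stieltjes integral of `X : ℒ → ℝ` with respect to `μ` on `𝒜L`. -/
noncomputable def upperSInt {ι : Type*} (H : ι → Set Ω) (𝒜L : Set (Set Ω))
    (X : ι → ℝ) (μ : Set Ω → ℝ) : ℝ :=
  sInf {x | ∃ T : Finset (Set Ω), IsFinPart 𝒜L T ∧
    x = ∑ A ∈ T, sSup {y | ∃ i, H i ⊆ A ∧ y = X i} * μ A}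

/-- `𝒜L`-continuity of a bounded function `X : ℒ → ℝ`. -/
def ALContinuous {ι : Type*} (H : ι → Set Ω) (𝒜L : Set (Set Ω)) (X : ι → ℝ) : Prop :=
  (∃ M : ℝ, ∀ i, |X i| ≤ M) ∧ ∀ t : ℝ, ∀ ε > (0 : ℝ), ∃ A ∈ 𝒜L,
    (⋃ i ∈ {i | t + ε ≤ X i}, H i) ⊆ A ∧ A ⊆ ⋃ i ∈ {i | t ≤ X i}, H i

/-- Countable additivity of `P` on the field `𝒜`. -/
def CountablyAdditiveOn (𝒜 : Set (Set Ω)) (P : Set Ω → ℝ) : Prop :=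
  ∀ A : ℕ → Set Ω, (∀ n, A n ∈ 𝒜) → (Pairwise fun m n => Disjoint (A m) (A n)) →
    (⋃ n, A n) ∈ 𝒜 → HasSum (fun n => P (A n)) (P (⋃ n, A n))

/-- A (normalized) capacity on the field `𝒜`. -/
def IsCapacity (𝒜 : Set (Set Ω)) (φ : Set Ω → ℝ) : Prop :=
  φ ∅ = 0 ∧ φ Set.univ = 1 ∧ (∀ A ∈ 𝒜, 0 ≤ φ A ∧ φ A ≤ 1) ∧
    ∀ A ∈ 𝒜, ∀ B ∈ 𝒜, A ⊆ B → φ A ≤ φ B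

/-- Total monotonicity of a capacity `φ` on the field `𝒜`. -/
def TotallyMonotone (𝒜 : Set (Set Ω)) (φ : Set Ω → ℝ) : Prop :=
  ∀ n : ℕ, 2 ≤ n → ∀ A : Fin n → Set Ω, (∀ i, A i ∈ 𝒜) →
    ∑ s ∈ Finset.univ.powerset.filter (fun s : Finset (Fin n) => s.Nonempty),
      (-1 : ℝ) ^ (s.card - 1) * φ (⋂ i ∈ s, A i) ≤ φ (⋃ i, A i)

/-- Restriction of a conditional probability to the domain `𝒜 × ℬ⁰`, viewed as a point
of the product space `ℝ^(𝒜 × ℬ⁰)`. -/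
def restrictPairs (𝒜 ℬ : Set (Set Ω)) (Q : Set Ω → Set Ω → ℝ)
    (p : {p : Set Ω × Set Ω // p.1 ∈ 𝒜 ∧ p.2 ∈ ℬ ∧ p.2.Nonempty}) : ℝ :=
  Q p.val.1 p.val.2

/-- Restriction of a set function to the domain `𝒜`, viewed as a point of `ℝ^𝒜`. -/
def restrictDom (𝒜 : Set (Set Ω)) (μ : Set Ω → ℝ) (A : {A : Set Ω // A ∈ 𝒜}) : ℝ :=
  μ A.val

/-- The field of all unions of members of the partition `H`, i.e. `⟨ℒ⟩*`. -/
def unionsOf {ι : Type*} (H : ι → Set Ω) : Set (Set Ω) :=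
  {A | ∃ S : Set ι, A = ⋃ i ∈ S, H i}

/-- The set `𝒬^fd` of fully ℒ-disintegrable full conditional probabilities on `𝒜`
extending `{π, σ}`. -/
def QfdSet {ι : Type*} (𝒜 𝒜L : Set (Set Ω)) (H : ι → Set Ω)
    (π : Set Ω → ℝ) (σ : Set Ω → ι → ℝ) : Set (Set Ω → Set Ω → ℝ) :=
  {Q | IsFCP 𝒜 Q ∧ ExtendsPriorStrategy 𝒜 𝒜L H π σ Q ∧
    ∀ F ∈ 𝒜, ∀ K ∈ 𝒜L, K.Nonempty →
      Q F K = lowerSInt H 𝒜L (fun i => σ F i) fun B => Q B K}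

/-- The set `𝒬^fsc` of fully strongly ℒ-conglomerable full conditional probabilities
on `𝒜` extending `{π, σ}`. -/
def QfscSet {ι : Type*} (𝒜 𝒜L : Set (Set Ω)) (H : ι → Set Ω)
    (π : Set Ω → ℝ) (σ : Set Ω → ι → ℝ) : Set (Set Ω → Set Ω → ℝ) :=
  {Q | IsFCP 𝒜 Q ∧ ExtendsPriorStrategy 𝒜 𝒜L H π σ Q ∧
    ∀ F ∈ 𝒜, ∀ K ∈ 𝒜L, K.Nonempty → ∀ B ∈ 𝒜L, B.Nonempty → B ⊆ K →
      Q B K * sInf {x | ∃ i, H i ⊆ B ∧ x = σ F i} ≤ Q (F ∩ B) K ∧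
      Q (F ∩ B) K ≤ Q B K * sSup {x | ∃ i, H i ⊆ B ∧ x = σ F i}}

/-- The set `𝒫^sc` of strongly ℒ-conglomerable joint probabilities consistent with `{π, σ}`. -/
def PscSet {ι : Type*} (𝒜 𝒜L : Set (Set Ω)) (H : ι → Set Ω)
    (π : Set Ω → ℝ) (σ : Set Ω → ι → ℝ) : Set (Set Ω → ℝ) :=
  {μ | (∃ P ∈ FCPSet 𝒜 𝒜L H π σ, μ = fun F => P F Set.univ) ∧
    ∀ F ∈ 𝒜, ∀ B ∈ 𝒜L, B.Nonempty →
      π B * sInf {x | ∃ i, H i ⊆ B ∧ x = σ F i} ≤ μ (F ∩ B) ∧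
      μ (F ∩ B) ≤ π B * sSup {x | ∃ i, H i ⊆ B ∧ x = σ F i}}

/-- The set `𝒫^fd` of fully ℒ-disintegrable conditional probabilities on `𝒜 × 𝒜L⁰`
extending `{π, σ}`. -/
def PfdSet {ι : Type*} (𝒜 𝒜L : Set (Set Ω)) (H : ι → Set Ω)
    (π : Set Ω → ℝ) (σ : Set Ω → ι → ℝ) : Set (Set Ω → Set Ω → ℝ) :=
  {P | (∀ E ∈ 𝒜, ∀ K ∈ 𝒜L, K.Nonempty → P E K = P (E ∩ K) K) ∧
    (∀ K ∈ 𝒜L, K.Nonempty → IsFAP 𝒜 fun E => P E K) ∧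
    (∀ E ∈ 𝒜, ∀ F ∈ 𝒜, ∀ K ∈ 𝒜L, K.Nonempty → E ∩ K ∈ 𝒜L → (E ∩ K).Nonempty →
      P (E ∩ F) K = P E K * P F (E ∩ K)) ∧
    (∀ B ∈ 𝒜L, P B Set.univ = π B) ∧ (∀ F ∈ 𝒜, ∀ i, P F (H i) = σ F i) ∧
    ∀ F ∈ 𝒜, ∀ K ∈ 𝒜L, K.Nonempty →
      P F K = lowerSInt H 𝒜L (fun i => σ F i) fun B => P B K}

/-- The Choquet integral `C∫ X dφ = ∫₀¹ φ₊((X ≥ t)) dt` of a `[0,1]`-valued `X : ℒ → ℝ`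
with respect to a capacity `φ` on `𝒜L`, where `φ₊` is the inner extension of `φ`. -/
noncomputable def choquetInt {ι : Type*} (H : ι → Set Ω) (𝒜L : Set (Set Ω))
    (X : ι → ℝ) (φ : Set Ω → ℝ) : ℝ :=
  ∫ t in (0 : ℝ)..(1 : ℝ),
    sSup {y | ∃ B ∈ 𝒜L, B ⊆ (⋃ i ∈ {i | t ≤ X i}, H i) ∧ y = φ B}

section AuxBasic

variable {Ω ι : Type*}

lemma IsSetField.empty_mem {𝒜 : Set (Set Ω)} (h : IsSetField 𝒜) : (∅ : Set Ω) ∈ 𝒜 := by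
  have := h.2.1 _ h.1
  simpa using this

lemma IsSetField.inter_mem {𝒜 : Set (Set Ω)} (h : IsSetField 𝒜) {A B : Set Ω}
    (hA : A ∈ 𝒜) (hB : B ∈ 𝒜) : A ∩ B ∈ 𝒜 := by
  have : (Aᶜ ∪ Bᶜ)ᶜ ∈ 𝒜 := h.2.1 _ (h.2.2 _ (h.2.1 _ hA) _ (h.2.1 _ hB))
  simpa [Set.compl_union] using this

lemma IsFAP.empty {𝒜 : Set (Set Ω)} {P : Set Ω → ℝ} (hF : IsSetField 𝒜)
    (h : IsFAP 𝒜 P) : P ∅ = 0 := by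
  have := h.2.2 ∅ hF.empty_mem ∅ hF.empty_mem (by simp)
  simp at this
  linarith

lemma IsFAP.mono {𝒜 : Set (Set Ω)} {P : Set Ω → ℝ} (hF : IsSetField 𝒜)
    (h : IsFAP 𝒜 P) {A B : Set Ω} (hA : A ∈ 𝒜) (hB : B ∈ 𝒜) (hAB : A ⊆ B) :
    P A ≤ P B := by
  have hmem : B ∩ Aᶜ ∈ 𝒜 := hF.inter_mem hB (hF.2.1 _ hA)
  have hdis : Disjoint A (B ∩ Aᶜ) := by
    rw [Set.disjoint_iff]; intro x hx; exact absurd hx.1 hx.2.2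
  have hun : A ∪ B ∩ Aᶜ = B := by
    ext x; constructor
    · rintro (hx | hx); exacts [hAB hx, hx.1]
    · intro hx; by_cases hxA : x ∈ A
      · exact Or.inl hxA
      · exact Or.inr ⟨hx, hxA⟩
  have := h.2.2 A hA _ hmem hdis
  rw [hun] at this
  have h0 := (h.1 _ hmem).1
  linarith

lemma IsFAP.union_add_inter {𝒜 : Set (Set Ω)} {P : Set Ω → ℝ} (hF : IsSetField 𝒜)
    (h : IsFAP 𝒜 P) {A B : Set Ω} (hA : A ∈ 𝒜) (hB : B ∈ 𝒜) :
    P (A ∪ B) + P (A ∩ B) = P A + P B := by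
  have hmem : B ∩ Aᶜ ∈ 𝒜 := hF.inter_mem hB (hF.2.1 _ hA)
  have h1 : P (A ∪ B) = P A + P (B ∩ Aᶜ) := by
    have hd : Disjoint A (B ∩ Aᶜ) := by
      rw [Set.disjoint_iff]; intro x hx; exact absurd hx.1 hx.2.2
    have := h.2.2 A hA _ hmem hd
    rw [show A ∪ B ∩ Aᶜ = A ∪ B by ext x; by_cases hx : x ∈ A <;> simp [hx]] at this
    exact this
  have h2 : P B = P (A ∩ B) + P (B ∩ Aᶜ) := by
    have hd : Disjoint (A ∩ B) (B ∩ Aᶜ) := by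
      rw [Set.disjoint_iff]; intro x hx; exact absurd hx.1.1 hx.2.2
    have := h.2.2 _ (hF.inter_mem hA hB) _ hmem hd
    rw [show A ∩ B ∪ B ∩ Aᶜ = B by ext x; by_cases hx : x ∈ A <;> simp [hx]] at this
    exact this
  linarith

/-- Every nonempty member of a field over the partition `H` contains some `H i`. -/
lemma exists_block_subset {H : ι → Set Ω} {𝒜L : Set (Set Ω)}
    (h𝒜L : IsFieldOver H 𝒜L) {A : Set Ω} (hA : A ∈ 𝒜L) (hne : A.Nonempty) :
    ∃ i, H i ⊆ A := by
  obtain ⟨S, rfl⟩ := h𝒜L.2.2 A hA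
  obtain ⟨x, hx⟩ := hne
  simp only [Set.mem_iUnion] at hx
  obtain ⟨i, hiS, _⟩ := hx
  exact ⟨i, Set.subset_biUnion_of_mem hiS⟩

/-- Each block is either inside or disjoint from a member of the field. -/
lemma block_subset_or_disjoint {H : ι → Set Ω} {𝒜L : Set (Set Ω)}
    (hH : IsPartition H) (h𝒜L : IsFieldOver H 𝒜L) {A : Set Ω} (hA : A ∈ 𝒜L) (i : ι) :
    H i ⊆ A ∨ H i ∩ A = ∅ := by
  obtain ⟨S, rfl⟩ := h𝒜L.2.2 A hA
  by_cases hi : i ∈ S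
  · exact Or.inl (Set.subset_biUnion_of_mem hi)
  · right
    ext x
    simp only [Set.mem_inter_iff, Set.mem_iUnion, Set.mem_empty_iff_false, iff_false]
    rintro ⟨hxi, j, hjS, hxj⟩
    have hij : i ≠ j := by rintro rfl; exact hi hjS
    exact (hH.2.1 hij).le_bot ⟨hxi, hxj⟩ |>.elim

end AuxBasic
section AuxSigma

variable {Ω ι : Type*} {𝒜 : Set (Set Ω)} {H : ι → Set Ω} {σ : Set Ω → ι → ℝ}

lemma sigma_nonneg (h𝒜 : IsSetField 𝒜) (hσ : IsStrategy 𝒜 H σ) {F : Set Ω}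
    (hF : F ∈ 𝒜) (i : ι) : 0 ≤ σ F i := ((hσ i).1.1 _ hF).1

lemma sigma_mono (h𝒜 : IsSetField 𝒜) (hσ : IsStrategy 𝒜 H σ) {F G : Set Ω}
    (hF : F ∈ 𝒜) (hG : G ∈ 𝒜) (hFG : F ⊆ G) (i : ι) : σ F i ≤ σ G i :=
  IsFAP.mono h𝒜 (hσ i).1 hF hG hFG

lemma sigma_le_one (h𝒜 : IsSetField 𝒜) (hσ : IsStrategy 𝒜 H σ) {F : Set Ω}
    (hF : F ∈ 𝒜) (i : ι) : σ F i ≤ 1 := ((hσ i).1.1 _ hF).2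

lemma sigma_zero_of_disjoint (h𝒜 : IsSetField 𝒜) (hσ : IsStrategy 𝒜 H σ) {F : Set Ω}
    (hF : F ∈ 𝒜) {i : ι} (hdis : H i ∩ F = ∅) : σ F i = 0 := by
  have hFc : Fᶜ ∈ 𝒜 := h𝒜.2.1 _ hF
  have h1 : σ Fᶜ i = 1 := (hσ i).2 _ hFc (by
    intro x hx hxF
    exact Set.eq_empty_iff_forall_notMem.1 hdis x ⟨hx, hxF⟩)
  have hadd := (hσ i).1.2.2 F hF Fᶜ hFc disjoint_compl_right
  rw [Set.union_compl_self] at hadd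
  have huniv : σ Set.univ i = 1 := (hσ i).1.2.1
  linarith

lemma sigma_inter_block (h𝒜 : IsSetField 𝒜) (hσ : IsStrategy 𝒜 H σ)
    (hHmem : ∀ i, H i ∈ 𝒜) {F : Set Ω} (hF : F ∈ 𝒜) (i : ι) :
    σ (F ∩ H i) i = σ F i := by
  have h1 : F ∩ H i ∈ 𝒜 := h𝒜.inter_mem hF (hHmem i)
  have h2 : F ∩ (H i)ᶜ ∈ 𝒜 := h𝒜.inter_mem hF (h𝒜.2.1 _ (hHmem i))
  have hz : σ (F ∩ (H i)ᶜ) i = 0 :=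
    sigma_zero_of_disjoint h𝒜 hσ h2 (by ext x; simp; tauto)
  have hd : Disjoint (F ∩ H i) (F ∩ (H i)ᶜ) := by
    rw [Set.disjoint_iff]; rintro x ⟨⟨-, h1⟩, -, h2⟩; exact absurd h1 h2
  have hadd := (hσ i).1.2.2 _ h1 _ h2 hd
  rw [show F ∩ H i ∪ F ∩ (H i)ᶜ = F by ext x; by_cases hx : x ∈ H i <;> simp [hx]] at hadd
  linarith

end AuxSigma

/-- A coherent selector: picks an element of every nonempty set, consistently
with respect to shrinking. -/
structure Sel (α : Type*) where
  sel : Set α → α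
  mem : ∀ S : Set α, S.Nonempty → sel S ∈ S
  coh : ∀ S S' : Set α, S' ⊆ S → S'.Nonempty → sel S ∈ S' → sel S' = sel S

noncomputable def minSel (α : Type*) [Nonempty α] : Sel α := by
  classical
  letI r : α → α → Prop := WellOrderingRel
  haveI : IsWellOrder α r := WellOrderingRel.isWellOrder
  refine
    { sel := fun S => if h : S.Nonempty then (IsWellFounded.wf (r := r)).min S h
        else Classical.arbitrary α
      mem := fun S hS => by
        simp only [dif_pos hS]
        exact (IsWellFounded.wf (r := r)).min_mem S hS
      coh := fun S S' hsub hS' hmem => by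
        have hS : S.Nonempty := hS'.mono hsub
        simp only [dif_pos hS, dif_pos hS'] at *
        have h1 : ¬ r ((IsWellFounded.wf (r := r)).min S' hS')
            ((IsWellFounded.wf (r := r)).min S hS) :=
          (IsWellFounded.wf (r := r)).not_lt_min S
            (hsub ((IsWellFounded.wf (r := r)).min_mem S' hS'))
        have h2 : ¬ r ((IsWellFounded.wf (r := r)).min S hS)
            ((IsWellFounded.wf (r := r)).min S' hS') :=
          (IsWellFounded.wf (r := r)).not_lt_min S' hmem
        rcases trichotomous_of r ((IsWellFounded.wf (r := r)).min S' hS')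
            ((IsWellFounded.wf (r := r)).min S hS) with h | h | h
        · exact absurd h h1
        · exact h
        · exact absurd h h2 }

/-- Selector that prefers a given element `a` whenever possible. -/
noncomputable def prioSel {α : Type*} (a : α) (s : Sel α) : Sel α where
  sel := fun S => if a ∈ S then a else s.sel S
  mem := fun S hS => by
    by_cases h : a ∈ S <;> simp [h]
    exact s.mem S hS
  coh := fun S S' hsub hS' hmem => by
    by_cases h : a ∈ S
    · simp only [if_pos h] at hmem
      rw [if_pos h, if_pos hmem]
    · have h' : a ∉ S' := fun hc => h (hsub hc)
      simp only [if_neg h] at hmem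
      rw [if_neg h, if_neg h']
      exact s.coh S S' hsub hS' hmem
section Functional

variable {Ω ι : Type*}

/-- The submodule of bounded real functions on `ι`. -/
def Vb (ι : Type*) : Submodule ℝ (ι → ℝ) where
  carrier := {f | ∃ M, ∀ i, |f i| ≤ M}
  add_mem' := by
    rintro f g ⟨Mf, hf⟩ ⟨Mg, hg⟩
    exact ⟨Mf + Mg, fun i => (abs_add_le _ _).trans (add_le_add (hf i) (hg i))⟩
  zero_mem' := ⟨0, fun i => by simp⟩
  smul_mem' := by
    rintro c f ⟨M, hf⟩
    exact ⟨|c| * M, fun i => by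
      simp only [Pi.smul_apply, smul_eq_mul, abs_mul]
      exact mul_le_mul_of_nonneg_left (hf i) (abs_nonneg c)⟩

/-- Values of `f` on blocks contained in `A`. -/
def blockVals (H : ι → Set Ω) (f : ι → ℝ) (A : Set Ω) : Set ℝ :=
  {y | ∃ i, H i ⊆ A ∧ y = f i}

noncomputable def blockSup (H : ι → Set Ω) (f : ι → ℝ) (A : Set Ω) : ℝ :=
  sSup (blockVals H f A)

/-- All upper Darboux sums of `f` over finite `𝒜L`-partitions. -/
def partSums (H : ι → Set Ω) (𝒜L : Set (Set Ω)) (π : Set Ω → ℝ) (f : ι → ℝ) : Set ℝ :=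
  {x | ∃ T : Finset (Set Ω), IsFinPart 𝒜L T ∧ x = ∑ A ∈ T, blockSup H f A * π A}

noncomputable def NN (H : ι → Set Ω) (𝒜L : Set (Set Ω)) (π : Set Ω → ℝ) (f : ι → ℝ) : ℝ :=
  sInf (partSums H 𝒜L π f)

variable {H : ι → Set Ω} {𝒜L : Set (Set Ω)} {π σ : Set Ω → ℝ}

lemma exists_block (hH : IsPartition H) (x : Ω) : ∃ i, x ∈ H i := by
  have := hH.2.2
  have hx : x ∈ ⋃ i, H i := this ▸ Set.mem_univ x
  simpa using hx

lemma finpart_univ [Nonempty Ω] (h𝒜L : IsFieldOver H 𝒜L) :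
    IsFinPart 𝒜L ({Set.univ} : Finset (Set Ω)) := by
  refine ⟨?_, ?_, ?_, ?_⟩
  · intro A hA
    simp only [Finset.coe_singleton, Set.mem_singleton_iff] at hA
    rw [hA]; exact h𝒜L.1.1
  · intro A hA; rw [Finset.mem_singleton] at hA; rw [hA]; exact Set.univ_nonempty
  · intro A hA B hB hAB
    rw [Finset.mem_singleton] at hA hB; rw [hA, hB] at hAB; exact absurd rfl hAB
  · simp

lemma finpart_block_exists (h𝒜L : IsFieldOver H 𝒜L) {T : Finset (Set Ω)}
    (hT : IsFinPart 𝒜L T) {A : Set Ω} (hA : A ∈ T) : ∃ i, H i ⊆ A :=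
  exists_block_subset h𝒜L (hT.1 hA) (hT.2.1 A hA)

lemma blockVals_nonempty {f : ι → ℝ} {A : Set Ω} (h : ∃ i, H i ⊆ A) :
    (blockVals H f A).Nonempty := by
  obtain ⟨i, hi⟩ := h; exact ⟨f i, i, hi, rfl⟩

lemma blockVals_bddAbove {f : ι → ℝ} {M : ℝ} (hf : ∀ i, f i ≤ M) (A : Set Ω) :
    BddAbove (blockVals H f A) := by
  refine ⟨M, ?_⟩; rintro y ⟨i, -, rfl⟩; exact hf i

lemma blockSup_le {f : ι → ℝ} {A : Set Ω} {c : ℝ} (hne : ∃ i, H i ⊆ A)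
    (h : ∀ i, H i ⊆ A → f i ≤ c) : blockSup H f A ≤ c := by
  apply csSup_le (blockVals_nonempty hne)
  rintro y ⟨i, hi, rfl⟩; exact h i hi

lemma le_blockSup {f : ι → ℝ} {A : Set Ω} {M : ℝ} (hf : ∀ i, f i ≤ M) {i : ι}
    (hi : H i ⊆ A) : f i ≤ blockSup H f A :=
  le_csSup (blockVals_bddAbove hf A) ⟨i, hi, rfl⟩

lemma sUnion_mem_field (h : IsSetField 𝒜L) {T : Finset (Set Ω)} (hT : ↑T ⊆ 𝒜L) :
    ⋃₀ (↑T : Set (Set Ω)) ∈ 𝒜L := by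
  classical
  induction T using Finset.induction_on with
  | empty => simpa using h.empty_mem
  | @insert A T' hA ih =>
    rw [Finset.coe_insert, Set.sUnion_insert]
    refine h.2.2 _ ?_ _ (ih ?_)
    · exact hT (by simp)
    · intro B hB; exact hT (by simp [hB])

lemma pi_sum_disjoint (h𝒜L : IsSetField 𝒜L) (hπ : IsFAP 𝒜L π) {T : Finset (Set Ω)}
    (hT : ↑T ⊆ 𝒜L) (hdis : ∀ A ∈ T, ∀ B ∈ T, A ≠ B → Disjoint A B) :
    π (⋃₀ (↑T : Set (Set Ω))) = ∑ A ∈ T, π A := by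
  classical
  induction T using Finset.induction_on with
  | empty => simpa using hπ.empty h𝒜L
  | @insert A T' hA ih =>
    rw [Finset.coe_insert, Set.sUnion_insert, Finset.sum_insert hA]
    have hAmem : A ∈ 𝒜L := hT (by simp)
    have hT' : ↑T' ⊆ 𝒜L := fun B hB => hT (by simp [hB])
    have hU : ⋃₀ (↑T' : Set (Set Ω)) ∈ 𝒜L := sUnion_mem_field h𝒜L hT'
    have hd : Disjoint A (⋃₀ (↑T' : Set (Set Ω))) := by
      rw [Set.disjoint_sUnion_right]
      intro B hB
      have hB' : B ∈ T' := by exact_mod_cast hB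
      exact hdis A (by simp) B (by simp [hB']) (by rintro rfl; exact hA hB')
    rw [hπ.2.2 A hAmem _ hU hd, ih hT'
      (fun X hX Y hY hXY => hdis X (by simp [hX]) Y (by simp [hY]) hXY)]

lemma pi_finpart_sum (h𝒜L : IsSetField 𝒜L) (hπ : IsFAP 𝒜L π) {T : Finset (Set Ω)}
    (hT : IsFinPart 𝒜L T) : ∑ A ∈ T, π A = 1 := by
  rw [← pi_sum_disjoint h𝒜L hπ hT.1 hT.2.2.1, hT.2.2.2, hπ.2.1]

lemma pi_inter_sum (h𝒜L : IsSetField 𝒜L) (hπ : IsFAP 𝒜L π) {A : Set Ω} (hA : A ∈ 𝒜L)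
    {T : Finset (Set Ω)} (hT : IsFinPart 𝒜L T) : ∑ B ∈ T, π (A ∩ B) = π A := by
  classical
  have key : ∀ T' : Finset (Set Ω), ↑T' ⊆ 𝒜L →
      (∀ X ∈ T', ∀ Y ∈ T', X ≠ Y → Disjoint X Y) →
      ∑ B ∈ T', π (A ∩ B) = π (A ∩ ⋃₀ (↑T' : Set (Set Ω))) := by
    intro T'
    induction T' using Finset.induction_on with
    | empty => intro _ _; simpa using (hπ.empty h𝒜L).symm
    | @insert B T'' hB ih =>
      intro hsub hdis
      have hBmem : B ∈ 𝒜L := hsub (by simp)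
      have hT'' : ↑T'' ⊆ 𝒜L := fun X hX => hsub (by simp [hX])
      have hU : ⋃₀ (↑T'' : Set (Set Ω)) ∈ 𝒜L := sUnion_mem_field h𝒜L hT''
      rw [Finset.sum_insert hB, Finset.coe_insert, Set.sUnion_insert,
        Set.inter_union_distrib_left]
      have hd : Disjoint (A ∩ B) (A ∩ ⋃₀ (↑T'' : Set (Set Ω))) := by
        have : Disjoint B (⋃₀ (↑T'' : Set (Set Ω))) := by
          rw [Set.disjoint_sUnion_right]
          intro C hC
          have hC' : C ∈ T'' := by exact_mod_cast hC
          exact hdis B (by simp) C (by simp [hC']) (by rintro rfl; exact hB hC')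
        exact this.mono Set.inter_subset_right Set.inter_subset_right
      rw [hπ.2.2 _ (h𝒜L.inter_mem hA hBmem) _ (h𝒜L.inter_mem hA hU) hd,
        ih hT'' (fun X hX Y hY hXY => hdis X (by simp [hX]) Y (by simp [hY]) hXY)]
  rw [key T hT.1 hT.2.2.1, hT.2.2.2, Set.inter_univ]

end Functional
section NNLemmas

variable {Ω ι : Type*} {H : ι → Set Ω} {𝒜L : Set (Set Ω)} {π : Set Ω → ℝ}

lemma partSums_nonempty [Nonempty Ω] (h𝒜L : IsFieldOver H 𝒜L) (f : ι → ℝ) :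
    (partSums H 𝒜L π f).Nonempty :=
  ⟨_, {Set.univ}, finpart_univ h𝒜L, rfl⟩

lemma partSums_lb (h𝒜L : IsFieldOver H 𝒜L) (hπ : IsFAP 𝒜L π) {f : ι → ℝ} {M : ℝ}
    (hf : ∀ i, |f i| ≤ M) : ∀ v ∈ partSums H 𝒜L π f, -M ≤ v := by
  rintro v ⟨T, hT, rfl⟩
  have : ∀ A ∈ T, -M * π A ≤ blockSup H f A * π A := by
    intro A hA
    obtain ⟨i, hi⟩ := finpart_block_exists h𝒜L hT hA
    have h1 : -M ≤ f i := (abs_le.1 (hf i)).1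
    have h2 : f i ≤ blockSup H f A := le_blockSup (fun j => (abs_le.1 (hf j)).2) hi
    exact mul_le_mul_of_nonneg_right (h1.trans h2) (hπ.1 _ (hT.1 hA)).1
  calc -M = ∑ A ∈ T, -M * π A := by
        rw [← Finset.mul_sum, pi_finpart_sum h𝒜L.1 hπ hT, mul_one]
    _ ≤ _ := Finset.sum_le_sum this

lemma partSums_bddBelow (h𝒜L : IsFieldOver H 𝒜L) (hπ : IsFAP 𝒜L π) {f : ι → ℝ} {M : ℝ}
    (hf : ∀ i, |f i| ≤ M) : BddBelow (partSums H 𝒜L π f) :=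
  ⟨-M, fun v hv => partSums_lb h𝒜L hπ hf v hv⟩

lemma NN_le (h𝒜L : IsFieldOver H 𝒜L) (hπ : IsFAP 𝒜L π) {f : ι → ℝ} {M : ℝ}
    (hf : ∀ i, |f i| ≤ M) {T : Finset (Set Ω)} (hT : IsFinPart 𝒜L T) :
    NN H 𝒜L π f ≤ ∑ A ∈ T, blockSup H f A * π A :=
  csInf_le (partSums_bddBelow h𝒜L hπ hf) ⟨T, hT, rfl⟩

lemma NN_nonpos [Nonempty Ω] (hH : IsPartition H) (h𝒜L : IsFieldOver H 𝒜L)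
    (hπ : IsFAP 𝒜L π) {f : ι → ℝ} {M : ℝ} (hf : ∀ i, |f i| ≤ M)
    (hle : ∀ i, f i ≤ 0) : NN H 𝒜L π f ≤ 0 := by
  refine (NN_le h𝒜L hπ hf (finpart_univ h𝒜L)).trans ?_
  rw [Finset.sum_singleton, hπ.2.1, mul_one]
  obtain ⟨i0⟩ : Nonempty ι := ⟨(exists_block hH (Classical.arbitrary Ω)).choose⟩
  exact blockSup_le ⟨i0, Set.subset_univ _⟩ (fun i _ => hle i)

lemma blockSup_const {c : ℝ} {A : Set Ω} (h : ∃ i, H i ⊆ A) :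
    blockSup H (fun _ => c) A = c := by
  have : blockVals H (fun _ => c) A = {c} := by
    apply Set.Subset.antisymm
    · rintro y ⟨i, -, rfl⟩; rfl
    · rintro y rfl; exact ⟨h.choose, h.choose_spec, rfl⟩
  rw [blockSup, this, csSup_singleton]

lemma NN_const [Nonempty Ω] (hH : IsPartition H) (h𝒜L : IsFieldOver H 𝒜L) (hπ : IsFAP 𝒜L π) (c : ℝ) :
    NN H 𝒜L π (fun _ => c) = c := by
  have : partSums H 𝒜L π (fun _ => c) = {c} := by
    apply Set.Subset.antisymm
    · rintro v ⟨T, hT, rfl⟩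
      have : ∀ A ∈ T, blockSup H (fun _ => c) A * π A = c * π A := fun A hA => by
        rw [blockSup_const (finpart_block_exists h𝒜L hT hA)]
      rw [Finset.sum_congr rfl this, ← Finset.mul_sum, pi_finpart_sum h𝒜L.1 hπ hT, mul_one]
      rfl
    · rintro v rfl
      refine ⟨{Set.univ}, finpart_univ h𝒜L, ?_⟩
      rw [Finset.sum_singleton, hπ.2.1, mul_one,
        blockSup_const ⟨(exists_block hH (Classical.arbitrary Ω)).choose, Set.subset_univ _⟩]
  rw [NN, this, csInf_singleton]

lemma NN_le_pair (h𝒜L : IsFieldOver H 𝒜L) (hπ : IsFAP 𝒜L π) {f : ι → ℝ} {M : ℝ}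
    (hf : ∀ i, |f i| ≤ M) {B : Set Ω} (hB : B ∈ 𝒜L) (hBne : B.Nonempty)
    (hBcne : Bᶜ.Nonempty) {b₁ b₂ : ℝ} (h1 : ∀ i, H i ⊆ B → f i = b₁)
    (h2 : ∀ i, H i ⊆ Bᶜ → f i = b₂) :
    NN H 𝒜L π f ≤ b₁ * π B + b₂ * π Bᶜ := by
  classical
  have hBc : Bᶜ ∈ 𝒜L := h𝒜L.1.2.1 _ hB
  have hne : B ≠ Bᶜ := by
    obtain ⟨x, hx⟩ := hBne
    intro h; rw [h] at hx; exact hx (h ▸ hx)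
  have hT : IsFinPart 𝒜L ({B, Bᶜ} : Finset (Set Ω)) := by
    refine ⟨?_, ?_, ?_, ?_⟩
    · intro A hA
      simp only [Finset.coe_insert, Finset.coe_singleton, Set.mem_insert_iff,
        Set.mem_singleton_iff] at hA
      rcases hA with rfl | rfl; exacts [hB, hBc]
    · intro A hA
      rcases Finset.mem_insert.1 hA with rfl | hA
      · exact hBne
      · rw [Finset.mem_singleton] at hA; rw [hA]; exact hBcne
    · intro A hA A' hA' hAA'
      rcases Finset.mem_insert.1 hA with rfl | hA <;>
        rcases Finset.mem_insert.1 hA' with rfl | hA'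
      · exact absurd rfl hAA'
      · rw [Finset.mem_singleton] at hA'; rw [hA']; exact disjoint_compl_right
      · rw [Finset.mem_singleton] at hA; rw [hA]; exact disjoint_compl_left
      · rw [Finset.mem_singleton] at hA hA'; rw [hA, hA'] at hAA'; exact absurd rfl hAA'
    · simp only [Finset.coe_insert, Finset.coe_singleton, Set.sUnion_insert,
        Set.sUnion_singleton, Set.union_compl_self]
  refine (NN_le h𝒜L hπ hf hT).trans ?_
  rw [Finset.sum_pair hne]
  have e1 : blockSup H f B = b₁ := by
    have hvals : blockVals H f B = {b₁} := by
      apply Set.Subset.antisymm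
      · rintro y ⟨i, hi, rfl⟩; exact h1 i hi
      · rintro y rfl
        obtain ⟨i, hi⟩ := exists_block_subset h𝒜L hB hBne
        exact ⟨i, hi, (h1 i hi).symm⟩
    rw [blockSup, hvals, csSup_singleton]
  have e2 : blockSup H f Bᶜ = b₂ := by
    have hvals : blockVals H f Bᶜ = {b₂} := by
      apply Set.Subset.antisymm
      · rintro y ⟨i, hi, rfl⟩; exact h2 i hi
      · rintro y rfl
        obtain ⟨i, hi⟩ := exists_block_subset h𝒜L hBc hBcne
        exact ⟨i, hi, (h2 i hi).symm⟩
    rw [blockSup, hvals, csSup_singleton]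
  rw [e1, e2]

end NNLemmas
section NNAdd

open scoped Pointwise

variable {Ω ι : Type*} {H : ι → Set Ω} {𝒜L : Set (Set Ω)} {π : Set Ω → ℝ}

lemma refine_finpart (h𝒜L : IsFieldOver H 𝒜L) {T1 T2 : Finset (Set Ω)}
    (h1 : IsFinPart 𝒜L T1) (h2 : IsFinPart 𝒜L T2) :
    IsFinPart 𝒜L (((T1 ×ˢ T2).filter fun p => (p.1 ∩ p.2).Nonempty).image
      fun p => p.1 ∩ p.2) := by
  classical
  constructor
  · intro C hC
    simp only [Finset.coe_image, Set.mem_image, Finset.mem_coe, Finset.mem_filter,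
      Finset.mem_product] at hC
    obtain ⟨p, ⟨⟨hp1, hp2⟩, -⟩, rfl⟩ := hC
    exact h𝒜L.1.inter_mem (h1.1 hp1) (h2.1 hp2)
  refine ⟨?_, ?_, ?_⟩
  · intro C hC
    simp only [Finset.mem_image, Finset.mem_filter, Finset.mem_product] at hC
    obtain ⟨p, ⟨-, hne⟩, rfl⟩ := hC
    exact hne
  · intro C hC D hD hCD
    simp only [Finset.mem_image, Finset.mem_filter, Finset.mem_product] at hC hD
    obtain ⟨p, ⟨⟨hp1, hp2⟩, hpne⟩, rfl⟩ := hC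
    obtain ⟨q, ⟨⟨hq1, hq2⟩, hqne⟩, rfl⟩ := hD
    by_cases e1 : p.1 = q.1
    · by_cases e2 : p.2 = q.2
      · exact absurd (by rw [e1, e2]) hCD
      · exact ((h2.2.2.1 _ hp2 _ hq2 e2).mono Set.inter_subset_right
          Set.inter_subset_right)
    · exact ((h1.2.2.1 _ hp1 _ hq1 e1).mono Set.inter_subset_left Set.inter_subset_left)
  · apply Set.eq_univ_of_forall
    intro x
    have hx1 : x ∈ ⋃₀ (↑T1 : Set (Set Ω)) := h1.2.2.2 ▸ Set.mem_univ x
    have hx2 : x ∈ ⋃₀ (↑T2 : Set (Set Ω)) := h2.2.2.2 ▸ Set.mem_univ x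
    obtain ⟨A, hA, hxA⟩ := hx1
    obtain ⟨B, hB, hxB⟩ := hx2
    refine Set.mem_sUnion.2 ⟨A ∩ B, ?_, ⟨hxA, hxB⟩⟩
    simp only [Finset.coe_image, Set.mem_image, Finset.mem_coe, Finset.mem_filter,
      Finset.mem_product]
    exact ⟨(A, B), ⟨⟨by exact_mod_cast hA, by exact_mod_cast hB⟩, ⟨x, hxA, hxB⟩⟩, rfl⟩

lemma NN_add [Nonempty Ω] (h𝒜L : IsFieldOver H 𝒜L) (hπ : IsFAP 𝒜L π)
    {f g : ι → ℝ} {Mf Mg : ℝ} (hf : ∀ i, |f i| ≤ Mf) (hg : ∀ i, |g i| ≤ Mg) :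
    NN H 𝒜L π (f + g) ≤ NN H 𝒜L π f + NN H 𝒜L π g := by
  classical
  have hfg : ∀ i, |(f + g) i| ≤ Mf + Mg := fun i =>
    (abs_add_le _ _).trans (add_le_add (hf i) (hg i))
  have key : ∀ x ∈ partSums H 𝒜L π f, ∀ y ∈ partSums H 𝒜L π g,
      NN H 𝒜L π (f + g) ≤ x + y := by
    rintro x ⟨T1, h1, rfl⟩ y ⟨T2, h2, rfl⟩
    set S := (T1 ×ˢ T2).filter fun p : Set Ω × Set Ω => (p.1 ∩ p.2).Nonempty with hS
    set T := S.image fun p : Set Ω × Set Ω => p.1 ∩ p.2 with hTdef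
    have hT : IsFinPart 𝒜L T := refine_finpart h𝒜L h1 h2
    refine (NN_le h𝒜L hπ hfg hT).trans ?_
    have hinj : ∀ p ∈ S, ∀ q ∈ S, p.1 ∩ p.2 = q.1 ∩ q.2 → p = q := by
      intro p hp q hq hpq
      simp only [hS, Finset.mem_filter, Finset.mem_product] at hp hq
      obtain ⟨⟨hp1, hp2⟩, hpne⟩ := hp
      obtain ⟨⟨hq1, hq2⟩, hqne⟩ := hq
      obtain ⟨z, hz⟩ := hpne
      have hz' : z ∈ q.1 ∩ q.2 := hpq ▸ hz
      have e1 : p.1 = q.1 := by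
        by_contra hne
        exact Set.not_disjoint_iff.2 ⟨z, hz.1, hz'.1⟩ (h1.2.2.1 _ hp1 _ hq1 hne)
      have e2 : p.2 = q.2 := by
        by_contra hne
        exact Set.not_disjoint_iff.2 ⟨z, hz.2, hz'.2⟩ (h2.2.2.1 _ hp2 _ hq2 hne)
      exact Prod.ext e1 e2
    rw [hTdef, Finset.sum_image hinj]
    have step1 : ∑ p ∈ S, blockSup H (f + g) (p.1 ∩ p.2) * π (p.1 ∩ p.2) ≤
        ∑ p ∈ S, (blockSup H f p.1 + blockSup H g p.2) * π (p.1 ∩ p.2) := by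
      apply Finset.sum_le_sum
      intro p hp
      simp only [hS, Finset.mem_filter, Finset.mem_product] at hp
      obtain ⟨⟨hp1, hp2⟩, hpne⟩ := hp
      have hπnn : 0 ≤ π (p.1 ∩ p.2) :=
        (hπ.1 _ (h𝒜L.1.inter_mem (h1.1 hp1) (h2.1 hp2))).1
      refine mul_le_mul_of_nonneg_right ?_ hπnn
      have hiex : ∃ i, H i ⊆ p.1 ∩ p.2 :=
        exists_block_subset h𝒜L (h𝒜L.1.inter_mem (h1.1 hp1) (h2.1 hp2)) hpne
      apply blockSup_le hiex
      intro i hi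
      have hif : f i ≤ blockSup H f p.1 :=
        le_blockSup (fun j => (abs_le.1 (hf j)).2) (hi.trans Set.inter_subset_left)
      have hig : g i ≤ blockSup H g p.2 :=
        le_blockSup (fun j => (abs_le.1 (hg j)).2) (hi.trans Set.inter_subset_right)
      exact add_le_add hif hig
    refine step1.trans ?_
    have expand : ∑ p ∈ S, (blockSup H f p.1 + blockSup H g p.2) * π (p.1 ∩ p.2) =
        ∑ p ∈ S, blockSup H f p.1 * π (p.1 ∩ p.2) +
        ∑ p ∈ S, blockSup H g p.2 * π (p.1 ∩ p.2) := by
      rw [← Finset.sum_add_distrib]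
      exact Finset.sum_congr rfl fun p _ => add_mul _ _ _
    rw [expand]
    have hzero : ∀ p ∈ T1 ×ˢ T2, p ∉ S → ∀ c : ℝ, c * π (p.1 ∩ p.2) = 0 := by
      intro p hp hpS c
      have : ¬ (p.1 ∩ p.2).Nonempty := by
        intro hne; exact hpS (Finset.mem_filter.2 ⟨hp, hne⟩)
      rw [Set.not_nonempty_iff_eq_empty.1 this, hπ.empty h𝒜L.1, mul_zero]
    have sumf : ∑ p ∈ S, blockSup H f p.1 * π (p.1 ∩ p.2) =
        ∑ A ∈ T1, blockSup H f A * π A := by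
      rw [show ∑ p ∈ S, blockSup H f p.1 * π (p.1 ∩ p.2) =
          ∑ p ∈ T1 ×ˢ T2, blockSup H f p.1 * π (p.1 ∩ p.2) from
        Finset.sum_subset (Finset.filter_subset _ _)
          (fun p hp hpS => hzero p hp hpS _)]
      rw [Finset.sum_product]
      apply Finset.sum_congr rfl
      intro A hA
      dsimp only
      rw [← Finset.mul_sum, pi_inter_sum h𝒜L.1 hπ (h1.1 hA) h2]
    have sumg : ∑ p ∈ S, blockSup H g p.2 * π (p.1 ∩ p.2) =
        ∑ B ∈ T2, blockSup H g B * π B := by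
      rw [show ∑ p ∈ S, blockSup H g p.2 * π (p.1 ∩ p.2) =
          ∑ p ∈ T1 ×ˢ T2, blockSup H g p.2 * π (p.1 ∩ p.2) from
        Finset.sum_subset (Finset.filter_subset _ _)
          (fun p hp hpS => hzero p hp hpS _)]
      rw [Finset.sum_product, Finset.sum_comm]
      apply Finset.sum_congr rfl
      intro B hB
      dsimp only
      have : ∀ A ∈ T1, blockSup H g B * π (A ∩ B) = blockSup H g B * π (B ∩ A) := by
        intro A hA; rw [Set.inter_comm]
      rw [Finset.sum_congr rfl this, ← Finset.mul_sum, pi_inter_sum h𝒜L.1 hπ (h2.1 hB) h1]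
    rw [sumf, sumg]
  have hg_ne : (partSums H 𝒜L π g).Nonempty := partSums_nonempty h𝒜L g
  have hf_ne : (partSums H 𝒜L π f).Nonempty := partSums_nonempty h𝒜L f
  have step : ∀ x ∈ partSums H 𝒜L π f, NN H 𝒜L π (f + g) - x ≤ NN H 𝒜L π g := by
    intro x hx
    apply le_csInf hg_ne
    intro y hy
    linarith [key x hx y hy]
  have : NN H 𝒜L π (f + g) - NN H 𝒜L π g ≤ NN H 𝒜L π f := by
    apply le_csInf hf_ne
    intro x hx
    linarith [step x hx]
  linarith

lemma NN_smul [Nonempty Ω] (h𝒜L : IsFieldOver H 𝒜L) (hπ : IsFAP 𝒜L π)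
    {f : ι → ℝ} {M : ℝ} (hf : ∀ i, |f i| ≤ M) {c : ℝ} (hc : 0 < c) :
    NN H 𝒜L π (c • f) = c * NN H 𝒜L π f := by
  have hbv : ∀ A : Set Ω, (∃ i, H i ⊆ A) → blockSup H (c • f) A = c * blockSup H f A := by
    intro A hA
    have himg : blockVals H (c • f) A = c • blockVals H f A := by
      ext y
      simp only [blockVals, Set.mem_setOf_eq, Set.mem_smul_set, Pi.smul_apply,
        smul_eq_mul]
      constructor
      · rintro ⟨i, hi, rfl⟩; exact ⟨f i, ⟨i, hi, rfl⟩, rfl⟩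
      · rintro ⟨z, ⟨i, hi, rfl⟩, rfl⟩; exact ⟨i, hi, rfl⟩
    rw [blockSup, himg, Real.sSup_smul_of_nonneg hc.le, smul_eq_mul, blockSup]
  have hps : partSums H 𝒜L π (c • f) = c • partSums H 𝒜L π f := by
    ext v
    simp only [partSums, Set.mem_setOf_eq, Set.mem_smul_set, smul_eq_mul]
    constructor
    · rintro ⟨T, hT, rfl⟩
      refine ⟨∑ A ∈ T, blockSup H f A * π A, ⟨T, hT, rfl⟩, ?_⟩
      rw [Finset.mul_sum]
      apply Finset.sum_congr rfl
      intro A hA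
      rw [hbv A (finpart_block_exists h𝒜L hT hA), mul_assoc]
    · rintro ⟨z, ⟨T, hT, rfl⟩, rfl⟩
      refine ⟨T, hT, ?_⟩
      rw [Finset.mul_sum]
      apply Finset.sum_congr rfl
      intro A hA
      rw [hbv A (finpart_block_exists h𝒜L hT hA), mul_assoc]
  rw [NN, hps, Real.sInf_smul_of_nonneg hc.le, smul_eq_mul, NN]

end NNAdd
section Mu

variable {Ω ι : Type*} {H : ι → Set Ω} {𝒜L 𝒜 : Set (Set Ω)} {π : Set Ω → ℝ}
  {σ : Set Ω → ι → ℝ}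

lemma exists_Lambda [Nonempty Ω] (hH : IsPartition H) (h𝒜L : IsFieldOver H 𝒜L)
    (hπ : IsFAP 𝒜L π) :
    ∃ Λ : (Vb ι) →ₗ[ℝ] ℝ, ∀ x : Vb ι, Λ x ≤ NN H 𝒜L π (x : ι → ℝ) := by
  classical
  set N' : (Vb ι) → ℝ := fun x => NN H 𝒜L π (x : ι → ℝ) with hN'
  have hdom : ∀ c : ℝ, c • (0 : Vb ι) = 0 → c • (0 : ℝ) = 0 := fun c _ => smul_zero c
  obtain ⟨Λ, hext, hΛ⟩ := exists_extension_of_le_sublinear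
    (LinearPMap.mkSpanSingleton' (0 : Vb ι) (0 : ℝ) hdom) N'
    (fun c hc x => by
      obtain ⟨M, hM⟩ := x.2
      have : ((c • x : Vb ι) : ι → ℝ) = c • (x : ι → ℝ) := rfl
      simp only [hN', this]
      exact NN_smul h𝒜L hπ hM hc)
    (fun x y => by
      obtain ⟨Mx, hMx⟩ := x.2
      obtain ⟨My, hMy⟩ := y.2
      have : ((x + y : Vb ι) : ι → ℝ) = (x : ι → ℝ) + (y : ι → ℝ) := rfl
      simp only [hN', this]
      exact NN_add h𝒜L hπ hMx hMy)
    (fun x => by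
      have hx0 : (x : Vb ι) = 0 := by
        have hd : (LinearPMap.mkSpanSingleton' (σ := RingHom.id ℝ) (0 : Vb ι) (0 : ℝ) hdom).domain =
            Submodule.span ℝ {(0 : Vb ι)} := LinearPMap.domain_mkSpanSingleton _ _ _
        have hmem : (x : Vb ι) ∈ Submodule.span ℝ {(0 : Vb ι)} := hd ▸ x.2
        rw [Submodule.mem_span_singleton] at hmem
        obtain ⟨c, hc⟩ := hmem
        rw [← hc, smul_zero]
      have hfx : (LinearPMap.mkSpanSingleton' (σ := RingHom.id ℝ) (0 : Vb ι) (0 : ℝ) hdom) x = 0 := by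
        have hx : x = 0 := Subtype.ext hx0
        rw [hx]
        exact LinearPMap.map_zero _
      rw [hfx, hx0]
      have : ((0 : Vb ι) : ι → ℝ) = fun _ => (0 : ℝ) := rfl
      simp only [hN', this]
      rw [NN_const hH h𝒜L hπ 0])
  exact ⟨Λ, hΛ⟩

lemma exists_mu [Nonempty Ω] (hH : IsPartition H) (h𝒜L : IsFieldOver H 𝒜L)
    (h𝒜 : IsSetField 𝒜) (h𝒜LA : 𝒜L ⊆ 𝒜) (hπ : IsFAP 𝒜L π) (hσ : IsStrategy 𝒜 H σ) :
    ∃ μ : Set Ω → ℝ, IsFAP 𝒜 μ ∧ (∀ B, B ∈ 𝒜L → μ B = π B) ∧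
      (∀ F, F ∈ 𝒜 → ∀ i, μ (F ∩ H i) = σ F i * π (H i)) ∧
      (∀ F, F ∈ 𝒜 → ∀ G, G ∈ 𝒜 → F ⊆ G → μ F ≤ μ G) := by
  classical
  obtain ⟨Λ, hΛ⟩ := exists_Lambda hH h𝒜L hπ
  have hHA : ∀ i, H i ∈ 𝒜 := fun i => h𝒜LA (h𝒜L.2.1 i)
  set μ : Set Ω → ℝ := fun F =>
    if h : (fun i => σ F i) ∈ Vb ι then Λ ⟨fun i => σ F i, h⟩ else 0 with hμ
  have hmemV : ∀ F, F ∈ 𝒜 → (fun i => σ F i) ∈ Vb ι := by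
    intro F hF
    exact ⟨1, fun i => abs_le.2 ⟨by linarith [sigma_nonneg h𝒜 hσ hF i],
      sigma_le_one h𝒜 hσ hF i⟩⟩
  have happ : ∀ F, (h : (fun i => σ F i) ∈ Vb ι) → μ F = Λ ⟨fun i => σ F i, h⟩ := by
    intro F h
    simp only [hμ, dif_pos h]
  -- key sandwich bounds
  have hub : ∀ (v : Vb ι), Λ v ≤ NN H 𝒜L π (v : ι → ℝ) := hΛ
  have hnegle : ∀ (v : Vb ι), -NN H 𝒜L π ((-v : Vb ι) : ι → ℝ) ≤ Λ v := by
    intro v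
    have := hub (-v)
    rw [map_neg] at this
    linarith
  have hconst1 : μ Set.univ = 1 := by
    have hmem : (fun i => σ Set.univ i) ∈ Vb ι := hmemV _ h𝒜.1
    rw [happ _ hmem]
    have h1 : (fun i => σ Set.univ i) = fun _ : ι => (1 : ℝ) := by
      funext i; exact (hσ i).1.2.1
    have e1 : Λ ⟨fun i => σ Set.univ i, hmem⟩ ≤ 1 := by
      refine (hub _).trans_eq ?_
      show NN H 𝒜L π (fun i => σ Set.univ i) = 1
      rw [h1, NN_const hH h𝒜L hπ]
    have e2 : (1 : ℝ) ≤ Λ ⟨fun i => σ Set.univ i, hmem⟩ := by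
      refine le_of_eq_of_le ?_ (hnegle _)
      show (1 : ℝ) = -NN H 𝒜L π (fun i => -σ Set.univ i)
      rw [show (fun i : ι => -σ Set.univ i) = fun _ : ι => (-1 : ℝ) by
        funext i
        have h1i : σ Set.univ i = 1 := (hσ i).1.2.1
        rw [h1i], NN_const hH h𝒜L hπ]
      norm_num
    linarith
  have hadd : ∀ A, A ∈ 𝒜 → ∀ B, B ∈ 𝒜 → Disjoint A B → μ (A ∪ B) = μ A + μ B := by
    intro A hA B hB hAB
    have hU : A ∪ B ∈ 𝒜 := h𝒜.2.2 _ hA _ hB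
    rw [happ _ (hmemV _ hU), happ _ (hmemV _ hA), happ _ (hmemV _ hB), ← map_add]
    congr 1
    apply Subtype.ext
    show (fun i => σ (A ∪ B) i) = fun i => σ A i + σ B i
    funext i
    exact (hσ i).1.2.2 A hA B hB hAB
  have hmono : ∀ F, F ∈ 𝒜 → ∀ G, G ∈ 𝒜 → F ⊆ G → μ F ≤ μ G := by
    intro F hF G hG hFG
    rw [happ _ (hmemV _ hF), happ _ (hmemV _ hG)]
    have key : Λ (⟨fun i => σ F i, hmemV _ hF⟩ - ⟨fun i => σ G i, hmemV _ hG⟩) ≤ 0 := by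
      refine (hub _).trans ?_
      have : (((⟨fun i => σ F i, hmemV _ hF⟩ : Vb ι) -
          ⟨fun i => σ G i, hmemV _ hG⟩ : Vb ι) : ι → ℝ) = fun i => σ F i - σ G i := rfl
      rw [this]
      refine NN_nonpos hH h𝒜L hπ (M := 2) ?_ ?_
      · intro i
        have n1 := sigma_nonneg h𝒜 hσ hF i
        have n2 := sigma_nonneg h𝒜 hσ hG i
        have b1 := sigma_le_one h𝒜 hσ hF i
        have b2 := sigma_le_one h𝒜 hσ hG i
        rw [abs_le]; constructor <;> linarith
      · intro i
        have := sigma_mono h𝒜 hσ hF hG hFG i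
        linarith
    rw [map_sub] at key
    linarith
  have hnn : ∀ F, F ∈ 𝒜 → 0 ≤ μ F := by
    intro F hF
    rw [happ _ (hmemV _ hF)]
    refine le_trans ?_ (hnegle _)
    have : ((-(⟨fun i => σ F i, hmemV _ hF⟩ : Vb ι) : Vb ι) : ι → ℝ) =
        fun i => -σ F i := rfl
    rw [this]
    have : NN H 𝒜L π (fun i => -σ F i) ≤ 0 := by
      refine NN_nonpos hH h𝒜L hπ (M := 1) ?_ ?_
      · intro i
        have n1 := sigma_nonneg h𝒜 hσ hF i
        have b1 := sigma_le_one h𝒜 hσ hF i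
        rw [abs_le]; constructor <;> linarith
      · intro i; linarith [sigma_nonneg h𝒜 hσ hF i]
    linarith
  have hpi : ∀ B, B ∈ 𝒜L → μ B = π B := by
    intro B hB
    have hBA : B ∈ 𝒜 := h𝒜LA hB
    rcases Set.eq_empty_or_nonempty B with rfl | hBne
    · have hz : (fun i => σ (∅ : Set Ω) i) = fun _ : ι => (0 : ℝ) := by
        funext i
        exact sigma_zero_of_disjoint h𝒜 hσ hBA (Set.inter_empty _)
      rw [happ _ (hmemV _ hBA)]
      have : (⟨fun i => σ (∅ : Set Ω) i, hmemV _ hBA⟩ : Vb ι) = 0 := by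
        apply Subtype.ext; exact hz
      rw [this, map_zero, hπ.empty h𝒜L.1]
    rcases Set.eq_empty_or_nonempty Bᶜ with hBc | hBcne
    · have : B = Set.univ := by
        rw [← Set.compl_empty, ← hBc, compl_compl]
      rw [this, hconst1]
      exact (hπ.2.1).symm
    · -- generic case: sandwich via NN_le_pair
      have hval1 : ∀ i, H i ⊆ B → σ B i = 1 := fun i hi => (hσ i).2 _ hBA hi
      have hval0 : ∀ i, H i ⊆ Bᶜ → σ B i = 0 := by
        intro i hi
        refine sigma_zero_of_disjoint h𝒜 hσ hBA ?_
        rw [Set.eq_empty_iff_forall_notMem]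
        rintro x ⟨hx1, hx2⟩
        exact hi hx1 hx2
      have hbound : ∀ i, |σ B i| ≤ 1 := fun i => abs_le.2
        ⟨by linarith [sigma_nonneg h𝒜 hσ hBA i], sigma_le_one h𝒜 hσ hBA i⟩
      have e1 : μ B ≤ π B := by
        rw [happ _ (hmemV _ hBA)]
        refine (hub _).trans ?_
        have := NN_le_pair h𝒜L hπ hbound hB hBne hBcne hval1 hval0
        simpa using this
      have e2 : π B ≤ μ B := by
        rw [happ _ (hmemV _ hBA)]
        refine le_trans ?_ (hnegle _)
        have : ((-(⟨fun i => σ B i, hmemV _ hBA⟩ : Vb ι) : Vb ι) : ι → ℝ) =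
            fun i => -σ B i := rfl
        rw [this]
        have hb2 : ∀ i, |(-σ B i : ℝ)| ≤ 1 := fun i => by
          rw [abs_neg]; exact hbound i
        have hnp := NN_le_pair h𝒜L hπ hb2 hB hBne hBcne
          (b₁ := -1) (b₂ := 0)
          (fun i hi => by show -σ B i = -1; rw [hval1 i hi])
          (fun i hi => by show -σ B i = 0; rw [hval0 i hi]; ring)
        have h2 : NN H 𝒜L π (fun i => -σ B i) ≤ -π B := by
          refine hnp.trans (le_of_eq ?_)
          ring
        linarith
      linarith
  have hdis : ∀ F, F ∈ 𝒜 → ∀ i, μ (F ∩ H i) = σ F i * π (H i) := by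
    intro F hF i
    have hFH : F ∩ H i ∈ 𝒜 := h𝒜.inter_mem hF (hHA i)
    have hsmul : (⟨fun j => σ (F ∩ H i) j, hmemV _ hFH⟩ : Vb ι) =
        σ F i • (⟨fun j => σ (H i) j, hmemV _ (hHA i)⟩ : Vb ι) := by
      apply Subtype.ext
      show (fun j => σ (F ∩ H i) j) = fun j => σ F i * σ (H i) j
      funext j
      by_cases hji : j = i
      · subst hji
        rw [sigma_inter_block h𝒜 hσ hHA hF j, (hσ j).2 _ (hHA j) subset_rfl, mul_one]
      · have hz1 : σ (F ∩ H i) j = 0 := by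
          refine sigma_zero_of_disjoint h𝒜 hσ hFH ?_
          rw [Set.eq_empty_iff_forall_notMem]
          rintro x ⟨hx1, -, hx2⟩
          exact (hH.2.1 hji).le_bot ⟨hx1, hx2⟩
        have hz2 : σ (H i) j = 0 := by
          refine sigma_zero_of_disjoint h𝒜 hσ (hHA i) ?_
          rw [Set.eq_empty_iff_forall_notMem]
          rintro x ⟨hx1, hx2⟩
          exact (hH.2.1 hji).le_bot ⟨hx1, hx2⟩
        rw [hz1, hz2, mul_zero]
    rw [happ _ (hmemV _ hFH), hsmul, map_smul, smul_eq_mul]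
    congr 1
    rw [← happ _ (hmemV _ (hHA i)), hpi _ (h𝒜L.2.1 i)]
  refine ⟨μ, ⟨?_, hconst1, hadd⟩, hpi, hdis, hmono⟩
  intro A hA
  exact ⟨hnn _ hA, (hmono _ hA _ h𝒜.1 (Set.subset_univ _)).trans_eq hconst1⟩

end Mu
section FCPConstruction

/-- A three-tier conditional probability: conditional of `μ` where `μ` is positive,
else conditional of the strategy on the selected block, else a Dirac measure. -/
noncomputable def Pdef {Ω ι : Type*} (H : ι → Set Ω) (σ : Set Ω → ι → ℝ)
    (μ : Set Ω → ℝ) (sI : Sel ι) (sO : Sel Ω) (E K : Set Ω) : ℝ :=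
  if 0 < μ K then μ (E ∩ K) / μ K
  else if 0 < σ K (sI.sel {j | (H j ∩ K).Nonempty}) then
    σ (E ∩ K) (sI.sel {j | (H j ∩ K).Nonempty}) / σ K (sI.sel {j | (H j ∩ K).Nonempty})
  else if sO.sel (H (sI.sel {j | (H j ∩ K).Nonempty}) ∩ K) ∈ E then 1 else 0

variable {Ω ι : Type*} {H : ι → Set Ω} {𝒜L 𝒜 : Set (Set Ω)} {π : Set Ω → ℝ}
  {σ : Set Ω → ι → ℝ}

lemma Pdef_mem_FCPSet [Nonempty Ω] (hH : IsPartition H) (h𝒜L : IsFieldOver H 𝒜L)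
    (h𝒜 : IsSetField 𝒜) (h𝒜LA : 𝒜L ⊆ 𝒜) (hπ : IsFAP 𝒜L π) (hσ : IsStrategy 𝒜 H σ)
    {μ : Set Ω → ℝ} (hμFAP : IsFAP 𝒜 μ) (hμπ : ∀ B, B ∈ 𝒜L → μ B = π B)
    (hμdis : ∀ F, F ∈ 𝒜 → ∀ i, μ (F ∩ H i) = σ F i * π (H i))
    (hμmono : ∀ F, F ∈ 𝒜 → ∀ G, G ∈ 𝒜 → F ⊆ G → μ F ≤ μ G)
    (sI : Sel ι) (sO : Sel Ω) :
    Pdef H σ μ sI sO ∈ FCPSet 𝒜 𝒜L H π σ := by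
  classical
  have hHA : ∀ i, H i ∈ 𝒜 := fun i => h𝒜LA (h𝒜L.2.1 i)
  set P := Pdef H σ μ sI sO with hP
  -- selected index facts
  have hSb : ∀ K : Set Ω, K.Nonempty → {j | (H j ∩ K).Nonempty}.Nonempty := by
    rintro K ⟨x, hx⟩
    obtain ⟨i, hi⟩ := exists_block hH x
    exact ⟨i, ⟨x, hi, hx⟩⟩
  -- case equations
  have eqA : ∀ E K : Set Ω, 0 < μ K → P E K = μ (E ∩ K) / μ K := by
    intro E K h; simp only [hP, Pdef, if_pos h]
  have eqB1 : ∀ E K : Set Ω, ¬ 0 < μ K →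
      0 < σ K (sI.sel {j | (H j ∩ K).Nonempty}) →
      P E K = σ (E ∩ K) (sI.sel {j | (H j ∩ K).Nonempty}) /
        σ K (sI.sel {j | (H j ∩ K).Nonempty}) := by
    intro E K h1 h2; simp only [hP, Pdef, if_neg h1, if_pos h2]
  have eqB2 : ∀ E K : Set Ω, ¬ 0 < μ K →
      ¬ 0 < σ K (sI.sel {j | (H j ∩ K).Nonempty}) →
      P E K = if sO.sel (H (sI.sel {j | (H j ∩ K).Nonempty}) ∩ K) ∈ E then 1 else 0 := by
    intro E K h1 h2; simp only [hP, Pdef, if_neg h1, if_neg h2]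
  -- C2 : each P (·|K) is a finitely additive probability
  have hC2 : ∀ K, K ∈ 𝒜 → K.Nonempty → IsFAP 𝒜 fun E => P E K := by
    intro K hK hKne
    by_cases hμK : 0 < μ K
    · refine ⟨?_, ?_, ?_⟩
      · intro A hA
        dsimp only
        rw [eqA A K hμK]
        have h1 : 0 ≤ μ (A ∩ K) := (hμFAP.1 _ (h𝒜.inter_mem hA hK)).1
        have h2 : μ (A ∩ K) ≤ μ K :=
          hμmono _ (h𝒜.inter_mem hA hK) _ hK Set.inter_subset_right
        exact ⟨div_nonneg h1 hμK.le, (div_le_one hμK).2 h2⟩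
      · dsimp only
        rw [eqA _ K hμK, Set.univ_inter, div_self (ne_of_gt hμK)]
      · intro A hA B hB hAB
        dsimp only
        rw [eqA _ K hμK, eqA _ K hμK, eqA _ K hμK, Set.union_inter_distrib_right,
          hμFAP.2.2 _ (h𝒜.inter_mem hA hK) _ (h𝒜.inter_mem hB hK)
            (hAB.mono Set.inter_subset_left Set.inter_subset_left), add_div]
    · set i := sI.sel {j | (H j ∩ K).Nonempty} with hi
      by_cases hσK : 0 < σ K i
      · refine ⟨?_, ?_, ?_⟩
        · intro A hA
          dsimp only
          rw [eqB1 A K hμK hσK]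
          have h1 : 0 ≤ σ (A ∩ K) i := sigma_nonneg h𝒜 hσ (h𝒜.inter_mem hA hK) i
          have h2 : σ (A ∩ K) i ≤ σ K i :=
            sigma_mono h𝒜 hσ (h𝒜.inter_mem hA hK) hK Set.inter_subset_right i
          exact ⟨div_nonneg h1 hσK.le, (div_le_one hσK).2 h2⟩
        · dsimp only
          rw [eqB1 _ K hμK hσK, Set.univ_inter, div_self (ne_of_gt hσK)]
        · intro A hA B hB hAB
          dsimp only
          have haddσ : σ (A ∩ K ∪ B ∩ K) i = σ (A ∩ K) i + σ (B ∩ K) i :=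
            (hσ i).1.2.2 _ (h𝒜.inter_mem hA hK) _ (h𝒜.inter_mem hB hK)
              (hAB.mono Set.inter_subset_left Set.inter_subset_left)
          rw [eqB1 _ K hμK hσK, eqB1 _ K hμK hσK, eqB1 _ K hμK hσK,
            Set.union_inter_distrib_right, ← hi, haddσ, add_div]
      · have hω : sO.sel (H i ∩ K) ∈ H i ∩ K := sO.mem _ (sI.mem _ (hSb K hKne))
        refine ⟨?_, ?_, ?_⟩
        · intro A hA
          dsimp only
          rw [eqB2 A K hμK hσK]
          split <;> norm_num
        · dsimp only
          rw [eqB2 _ K hμK hσK, if_pos (Set.mem_univ _)]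
        · intro A hA B hB hAB
          dsimp only
          rw [eqB2 _ K hμK hσK, eqB2 _ K hμK hσK, eqB2 _ K hμK hσK]
          by_cases hA' : sO.sel (H i ∩ K) ∈ A
          · have hB' : sO.sel (H i ∩ K) ∉ B := fun hB' =>
              Set.not_disjoint_iff.2 ⟨_, hA', hB'⟩ hAB
            simp [← hi, hA', hB']
          · by_cases hB' : sO.sel (H i ∩ K) ∈ B <;> simp [← hi, hA', hB']
  -- C1
  have hC1 : ∀ E, E ∈ 𝒜 → ∀ K, K ∈ 𝒜 → K.Nonempty → P E K = P (E ∩ K) K := by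
    intro E hE K hK hKne
    by_cases hμK : 0 < μ K
    · rw [eqA E K hμK, eqA (E ∩ K) K hμK, Set.inter_assoc, Set.inter_self]
    · set i := sI.sel {j | (H j ∩ K).Nonempty} with hi
      by_cases hσK : 0 < σ K i
      · rw [eqB1 E K hμK hσK, eqB1 (E ∩ K) K hμK hσK, Set.inter_assoc, Set.inter_self]
      · have hω : sO.sel (H i ∩ K) ∈ H i ∩ K := sO.mem _ (sI.mem _ (hSb K hKne))
        rw [eqB2 E K hμK hσK, eqB2 (E ∩ K) K hμK hσK]
        by_cases hω' : sO.sel (H i ∩ K) ∈ E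
        · rw [if_pos hω', if_pos ⟨hω', hω.2⟩]
        · rw [if_neg hω', if_neg (fun h => hω' h.1)]
  -- helper: zero propagation
  have hμ0 : ∀ {K : Set Ω}, K ∈ 𝒜 → ¬ 0 < μ K → μ K = 0 := by
    intro K hK h
    exact le_antisymm (not_lt.1 h) (hμFAP.1 _ hK).1
  -- C3
  have hC3 : ∀ E, E ∈ 𝒜 → ∀ F, F ∈ 𝒜 → ∀ K, K ∈ 𝒜 → K.Nonempty → (E ∩ K).Nonempty →
      P (E ∩ F) K = P E K * P F (E ∩ K) := by
    intro E hE F hF K hK hKne hEKne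
    have hEK : E ∩ K ∈ 𝒜 := h𝒜.inter_mem hE hK
    have hEFK : E ∩ F ∩ K = F ∩ (E ∩ K) := by ext x; simp; tauto
    by_cases hμK : 0 < μ K
    · rw [eqA (E ∩ F) K hμK, eqA E K hμK]
      by_cases hμEK : 0 < μ (E ∩ K)
      · rw [eqA F (E ∩ K) hμEK, hEFK]
        field_simp
      · have h0 : μ (E ∩ K) = 0 := hμ0 hEK hμEK
        have h1 : μ (E ∩ F ∩ K) = 0 := by
          have hle : μ (E ∩ F ∩ K) ≤ μ (E ∩ K) := by
            apply hμmono _ (h𝒜.inter_mem (h𝒜.inter_mem hE hF) hK) _ hEK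
            rw [hEFK]; exact Set.inter_subset_right
          have hge : 0 ≤ μ (E ∩ F ∩ K) :=
            (hμFAP.1 _ (h𝒜.inter_mem (h𝒜.inter_mem hE hF) hK)).1
          linarith
        rw [h0, h1, zero_div, zero_mul]
    · set i := sI.sel {j | (H j ∩ K).Nonempty} with hi
      have hμEK : ¬ 0 < μ (E ∩ K) := by
        intro hpos
        have : μ (E ∩ K) ≤ μ K := hμmono _ hEK _ hK Set.inter_subset_right
        have := hμ0 hK hμK
        linarith
      have hsub : {j | (H j ∩ (E ∩ K)).Nonempty} ⊆ {j | (H j ∩ K).Nonempty} := by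
        intro j hj
        exact hj.mono (Set.inter_subset_inter_right _ Set.inter_subset_right)
      by_cases hσK : 0 < σ K i
      · by_cases hσEK : 0 < σ (E ∩ K) i
        · -- the selected block meets E ∩ K
          have hiEK : (H i ∩ (E ∩ K)).Nonempty := by
            by_contra hcon
            rw [Set.not_nonempty_iff_eq_empty] at hcon
            exact absurd (sigma_zero_of_disjoint h𝒜 hσ hEK hcon) (ne_of_gt hσEK)
          have hieq : sI.sel {j | (H j ∩ (E ∩ K)).Nonempty} = i :=
            sI.coh _ _ hsub ⟨i, hiEK⟩ hiEK
          rw [eqB1 (E ∩ F) K hμK hσK, eqB1 E K hμK hσK, eqB1 F (E ∩ K) hμEK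
            (by rw [hieq]; exact hσEK)]
          rw [hieq, hEFK]
          field_simp
          ring
        · have h1 : σ (E ∩ F ∩ K) i = 0 := by
            have hle : σ (E ∩ F ∩ K) i ≤ σ (E ∩ K) i := by
              apply sigma_mono h𝒜 hσ (h𝒜.inter_mem (h𝒜.inter_mem hE hF) hK) hEK
              rw [hEFK]; exact Set.inter_subset_right
            have hge : 0 ≤ σ (E ∩ F ∩ K) i :=
              sigma_nonneg h𝒜 hσ (h𝒜.inter_mem (h𝒜.inter_mem hE hF) hK) i
            have h0 : σ (E ∩ K) i = 0 :=
              le_antisymm (not_lt.1 hσEK) (sigma_nonneg h𝒜 hσ hEK i)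
            linarith
          have h0 : σ (E ∩ K) i = 0 :=
            le_antisymm (not_lt.1 hσEK) (sigma_nonneg h𝒜 hσ hEK i)
          rw [eqB1 (E ∩ F) K hμK hσK, eqB1 E K hμK hσK, h1, h0, zero_div, zero_mul]
      · -- Dirac tier
        have hω : sO.sel (H i ∩ K) ∈ H i ∩ K := sO.mem _ (sI.mem _ (hSb K hKne))
        rw [eqB2 (E ∩ F) K hμK hσK, eqB2 E K hμK hσK]
        by_cases hωE : sO.sel (H i ∩ K) ∈ E
        · have hiEK : (H i ∩ (E ∩ K)).Nonempty := ⟨_, hω.1, hωE, hω.2⟩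
          have hieq : sI.sel {j | (H j ∩ (E ∩ K)).Nonempty} = i :=
            sI.coh _ _ hsub ⟨i, hiEK⟩ hiEK
          have hσEK : ¬ 0 < σ (E ∩ K) (sI.sel {j | (H j ∩ (E ∩ K)).Nonempty}) := by
            rw [hieq]
            intro hpos
            have hle : σ (E ∩ K) i ≤ σ K i :=
              sigma_mono h𝒜 hσ hEK hK Set.inter_subset_right i
            have h0 : σ K i = 0 :=
              le_antisymm (not_lt.1 hσK) (sigma_nonneg h𝒜 hσ hK i)
            linarith
          rw [eqB2 F (E ∩ K) hμEK hσEK]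
          have hωeq : sO.sel (H (sI.sel {j | (H j ∩ (E ∩ K)).Nonempty}) ∩ (E ∩ K)) =
              sO.sel (H i ∩ K) := by
            rw [hieq]
            exact sO.coh _ _ (Set.inter_subset_inter_right _ Set.inter_subset_right)
              hiEK ⟨hω.1, hωE, hω.2⟩
          rw [hωeq, if_pos hωE, one_mul]
          by_cases hωF : sO.sel (H i ∩ K) ∈ F
          · rw [if_pos ⟨hωE, hωF⟩, if_pos hωF]
          · rw [if_neg (fun h => hωF h.2), if_neg hωF]
        · rw [if_neg hωE, zero_mul, if_neg (fun h => hωE h.1)]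
  -- Extension of the prior
  have hμuniv : 0 < μ Set.univ := by rw [hμFAP.2.1]; norm_num
  have hExtπ : ∀ B, B ∈ 𝒜L → P B Set.univ = π B := by
    intro B hB
    rw [eqA B Set.univ hμuniv, Set.inter_univ, hμFAP.2.1, div_one, hμπ _ hB]
  -- Extension of the strategy
  have hExtσ : ∀ F, F ∈ 𝒜 → ∀ i, P F (H i) = σ F i := by
    intro F hF i
    have hHine : (H i).Nonempty := hH.1 i
    have hiset : {j | (H j ∩ H i).Nonempty} = {i} := by
      ext j
      simp only [Set.mem_setOf_eq, Set.mem_singleton_iff]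
      constructor
      · intro hj
        by_contra hne
        obtain ⟨x, hx1, hx2⟩ := hj
        exact (hH.2.1 hne).le_bot ⟨hx1, hx2⟩
      · rintro rfl
        simpa [Set.inter_self] using hHine
    by_cases hμH : 0 < μ (H i)
    · rw [eqA F (H i) hμH]
      have h1 : μ (F ∩ H i) = σ F i * π (H i) := hμdis F hF i
      have h2 : μ (H i) = π (H i) := hμπ _ (h𝒜L.2.1 i)
      rw [h1, h2]
      rw [h2] at hμH
      field_simp
    · have hsel : sI.sel {j | (H j ∩ H i).Nonempty} = i := by
        rw [hiset]
        have := sI.mem {i} ⟨i, rfl⟩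
        simpa using this
      have hσH : 0 < σ (H i) (sI.sel {j | (H j ∩ H i).Nonempty}) := by
        rw [hsel, (hσ i).2 _ (hHA i) subset_rfl]
        norm_num
      rw [eqB1 F (H i) hμH hσH, hsel, (hσ i).2 _ (hHA i) subset_rfl, div_one,
        sigma_inter_block h𝒜 hσ hHA hF i]
  exact ⟨⟨fun E hE K hK hKne => hC1 E hE K hK hKne, hC2, hC3⟩, hExtπ, hExtσ⟩

end FCPConstruction
section InclExcl

variable {Ω γ : Type*} {𝒜L : Set (Set Ω)} {π : Set Ω → ℝ}

lemma biUnion_mem_field (h : IsSetField 𝒜L) (J : Finset γ) (A : γ → Set Ω)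
    (hA : ∀ j ∈ J, A j ∈ 𝒜L) : (⋃ j ∈ J, A j) ∈ 𝒜L := by
  classical
  induction J using Finset.induction_on with
  | empty => simpa using h.empty_mem
  | @insert a J' ha ih =>
    rw [Finset.set_biUnion_insert]
    exact h.2.2 _ (hA a (by simp)) _ (ih fun j hj => hA j (by simp [hj]))

lemma biInter_mem_field (h : IsSetField 𝒜L) {J : Finset γ} (hJ : J.Nonempty)
    (A : γ → Set Ω) (hA : ∀ j ∈ J, A j ∈ 𝒜L) : (⋂ j ∈ J, A j) ∈ 𝒜L := by
  classical
  induction J using Finset.induction_on with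
  | empty => exact absurd hJ (by simp)
  | @insert a J' ha ih =>
    rw [Finset.set_biInter_insert]
    rcases J'.eq_empty_or_nonempty with rfl | hJ'
    · simpa using hA a (by simp)
    · exact h.inter_mem (hA a (by simp)) (ih hJ' fun j hj => hA j (by simp [hj]))

lemma biInter_const_inter {t : Finset γ} (ht : t.Nonempty) (X : Set Ω) (A : γ → Set Ω) :
    ⋂ j ∈ t, (X ∩ A j) = X ∩ ⋂ j ∈ t, A j := by
  obtain ⟨j₀, hj₀⟩ := ht
  ext x
  simp only [Set.mem_iInter, Set.mem_inter_iff]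
  constructor
  · intro h
    exact ⟨(h j₀ hj₀).1, fun j hj => (h j hj).2⟩
  · rintro ⟨h1, h2⟩ j hj
    exact ⟨h1, h2 j hj⟩

lemma pi_inclusion_exclusion (h𝒜L : IsSetField 𝒜L) (hπ : IsFAP 𝒜L π)
    (J : Finset γ) (A : γ → Set Ω) (hA : ∀ j ∈ J, A j ∈ 𝒜L) :
    π (⋃ j ∈ J, A j) = ∑ s ∈ J.powerset.filter (fun s => s.Nonempty),
      (-1 : ℝ) ^ (s.card - 1) * π (⋂ j ∈ s, A j) := by
  classical
  induction J using Finset.induction_on generalizing A with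
  | empty => simp [hπ.empty h𝒜L, Finset.filter_singleton]
  | @insert a J ha ih =>
    have hAa : A a ∈ 𝒜L := hA a (by simp)
    have hAJ : ∀ j ∈ J, A j ∈ 𝒜L := fun j hj => hA j (by simp [hj])
    have hU : (⋃ j ∈ J, A j) ∈ 𝒜L := biUnion_mem_field h𝒜L J A hAJ
    -- LHS via union formula
    have hkey : π (A a ∪ ⋃ j ∈ J, A j) =
        π (A a) + π (⋃ j ∈ J, A j) - π (A a ∩ ⋃ j ∈ J, A j) := by
      have := hπ.union_add_inter h𝒜L hAa hU
      linarith
    have hAaU : A a ∩ ⋃ j ∈ J, A j = ⋃ j ∈ J, (A a ∩ A j) := by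
      rw [Set.inter_iUnion₂]
    have IH1 : π (⋃ j ∈ J, A j) = ∑ s ∈ J.powerset.filter (fun s => s.Nonempty),
        (-1 : ℝ) ^ (s.card - 1) * π (⋂ j ∈ s, A j) := ih A hAJ
    have IH2 : π (⋃ j ∈ J, (A a ∩ A j)) =
        ∑ s ∈ J.powerset.filter (fun s => s.Nonempty),
          (-1 : ℝ) ^ (s.card - 1) * π (⋂ j ∈ s, (A a ∩ A j)) :=
      ih (fun j => A a ∩ A j) (fun j hj => h𝒜L.inter_mem hAa (hAJ j hj))
    -- RHS manipulation
    set f : Finset γ → ℝ := fun s => (-1 : ℝ) ^ (s.card - 1) * π (⋂ j ∈ s, A j) with hf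
    have hRHS : ∑ s ∈ (insert a J).powerset.filter (fun s => s.Nonempty), f s =
        (∑ s ∈ J.powerset.filter (fun s => s.Nonempty), f s) +
        ∑ t ∈ J.powerset, f (insert a t) := by
      rw [Finset.sum_filter, Finset.sum_powerset_insert ha, ← Finset.sum_filter]
      congr 1
      apply Finset.sum_congr rfl
      intro t ht
      rw [if_pos (Finset.insert_nonempty a t)]
    have hsplit2 : ∑ t ∈ J.powerset, f (insert a t) =
        f {a} + ∑ t ∈ J.powerset.filter (fun s => s.Nonempty), f (insert a t) := by
      rw [← Finset.sum_filter_add_sum_filter_not J.powerset (fun s => s.Nonempty)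
        (fun t => f (insert a t))]
      have : J.powerset.filter (fun s => ¬ s.Nonempty) = {∅} := by
        ext s
        simp only [Finset.mem_filter, Finset.mem_powerset,
          Finset.not_nonempty_iff_eq_empty, Finset.mem_singleton]
        constructor
        · rintro ⟨-, h⟩; exact h
        · rintro rfl; exact ⟨Finset.empty_subset _, rfl⟩
      rw [this, Finset.sum_singleton, LawfulSingleton.insert_empty_eq, add_comm]
    have hfa : f {a} = π (A a) := by
      rw [hf]
      simp only [Finset.card_singleton, Nat.sub_self, pow_zero, one_mul,
        Finset.set_biInter_singleton]
    have hterm : ∀ t ∈ J.powerset.filter (fun s => s.Nonempty),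
        f (insert a t) = -((-1 : ℝ) ^ (t.card - 1) * π (⋂ j ∈ t, (A a ∩ A j))) := by
      intro t ht
      rw [Finset.mem_filter, Finset.mem_powerset] at ht
      obtain ⟨htJ, htne⟩ := ht
      have hat : a ∉ t := fun h => ha (htJ h)
      rw [hf]
      simp only []
      rw [Finset.card_insert_of_notMem hat, Finset.set_biInter_insert,
        ← biInter_const_inter htne, Nat.add_sub_cancel]
      obtain ⟨m, hm⟩ : ∃ m, t.card = m + 1 :=
        ⟨t.card - 1, (Nat.succ_pred_eq_of_pos (Finset.card_pos.2 htne)).symm⟩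
      rw [hm, Nat.add_sub_cancel, pow_succ]
      ring
    rw [Finset.set_biUnion_insert, hkey, hAaU, hRHS, hsplit2, hfa,
      Finset.sum_congr rfl hterm, Finset.sum_neg_distrib, IH1, ← IH2]
    ring

lemma pi_ie_fin [Nonempty Ω] (h𝒜L : IsSetField 𝒜L) (hπ : IsFAP 𝒜L π) {n : ℕ}
    (A : Fin n → Set Ω) (hA : ∀ i, A i ∈ 𝒜L) :
    π (⋃ i, A i) = ∑ s ∈ Finset.univ.powerset.filter (fun s : Finset (Fin n) => s.Nonempty),
      (-1 : ℝ) ^ (s.card - 1) * π (⋂ i ∈ s, A i) := by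
  rw [← pi_inclusion_exclusion h𝒜L hπ Finset.univ A (fun j _ => hA j)]
  congr 1
  simp

end InclExcl
section MainAux

variable {Ω γ : Type*}

lemma biInter_inter_const {t : Finset γ} (ht : t.Nonempty) (A : γ → Set Ω) (K : Set Ω) :
    ⋂ j ∈ t, (A j ∩ K) = (⋂ j ∈ t, A j) ∩ K := by
  obtain ⟨j₀, hj₀⟩ := ht
  ext x
  simp only [Set.mem_iInter, Set.mem_inter_iff]
  constructor
  · intro h
    exact ⟨fun j hj => (h j hj).1, (h j₀ hj₀).2⟩
  · rintro ⟨h1, h2⟩ j hj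
    exact ⟨h1 j hj, h2⟩

lemma csInf_of_const {s : Set ℝ} {v : ℝ} (hne : s.Nonempty) (h : ∀ x ∈ s, x = v) :
    sInf s = v := by
  have : s = {v} := Set.eq_singleton_iff_nonempty_unique_mem.2 ⟨hne, h⟩
  rw [this, csInf_singleton]

end MainAux
/-- (i) for `K ∈ 𝒜L⁰` the lower envelope `π^p_*(·|K)` of the conditional
priors is a totally monotone capacity on `𝒜L`; (ii) its closed form. -/
theorem statement13 {Ω ι κ : Type*} [Nonempty Ω] (H : ι → Set Ω) (E : κ → Set Ω)
    (𝒜L 𝒜E 𝒜 : Set (Set Ω))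
    (hH : IsPartition H) (hE : IsPartition E)
    (h𝒜L : IsFieldOver H 𝒜L) (h𝒜E : IsFieldOver E 𝒜E)
    (h𝒜 : IsJointField H E 𝒜L 𝒜E 𝒜)
    (π : Set Ω → ℝ) (hπ : IsFAP 𝒜L π)
    (σ : Set Ω → ι → ℝ) (hσ : IsStrategy 𝒜 H σ) :
    (∀ K ∈ 𝒜L, K.Nonempty →
      IsCapacity 𝒜L (fun B => lowEnv (FCPSet 𝒜 𝒜L H π σ) B K) ∧
      TotallyMonotone 𝒜L (fun B => lowEnv (FCPSet 𝒜 𝒜L H π σ) B K)) ∧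
    (∀ F ∈ 𝒜L, ∀ K ∈ 𝒜L, K.Nonempty →
      (F ∩ K = K → lowEnv (FCPSet 𝒜 𝒜L H π σ) F K = 1) ∧
      (F ∩ K ≠ K →
        (0 < π K → lowEnv (FCPSet 𝒜 𝒜L H π σ) F K = π (F ∩ K) / π K) ∧
        (π K = 0 → lowEnv (FCPSet 𝒜 𝒜L H π σ) F K = 0))) := by
  classical
  have h𝒜F : IsSetField 𝒜 := h𝒜.1
  have h𝒜LA : 𝒜L ⊆ 𝒜 := h𝒜.2.1
  haveI hιne : Nonempty ι := ⟨(exists_block hH (Classical.arbitrary Ω)).choose⟩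
  obtain ⟨μ, hμFAP, hμπ, hμdis, hμmono⟩ := exists_mu hH h𝒜L h𝒜F h𝒜LA hπ hσ
  set Ps := FCPSet 𝒜 𝒜L H π σ with hPs
  have hP₀ : Pdef H σ μ (minSel ι) (minSel Ω) ∈ Ps :=
    Pdef_mem_FCPSet hH h𝒜L h𝒜F h𝒜LA hπ hσ hμFAP hμπ hμdis hμmono _ _
  have hPsne : Ps.Nonempty := ⟨_, hP₀⟩
  -- values of members are in [0,1]
  have fact4 : ∀ F, F ∈ 𝒜 → ∀ K, K ∈ 𝒜 → K.Nonempty → ∀ P ∈ Ps,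
      0 ≤ P F K ∧ P F K ≤ 1 := by
    intro F hF K hK hKne P hP
    exact (hP.1.2.1 K hK hKne).1 F hF
  -- all members assign 1 when F ⊇ K
  have fact1 : ∀ F, F ∈ 𝒜L → ∀ K, K ∈ 𝒜L → K.Nonempty → F ∩ K = K →
      ∀ P ∈ Ps, P F K = 1 := by
    intro F hF K hK hKne hFK P hP
    obtain ⟨⟨hC1, hC2, hC3⟩, hExtπ, hExtσ⟩ := hP
    have hKA : K ∈ 𝒜 := h𝒜LA hK
    have e1 : P F K = P (F ∩ K) K := hC1 F (h𝒜LA hF) K hKA hKne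
    have e2 : P Set.univ K = P (Set.univ ∩ K) K := hC1 _ h𝒜F.1 K hKA hKne
    have e3 : P Set.univ K = 1 := (hC2 K hKA hKne).2.1
    rw [Set.univ_inter] at e2
    rw [e1, hFK, ← e2, e3]
  -- when π K > 0, members are uniquely determined
  have fact2 : ∀ F, F ∈ 𝒜L → ∀ K, K ∈ 𝒜L → K.Nonempty → 0 < π K →
      ∀ P ∈ Ps, P F K = π (F ∩ K) / π K := by
    intro F hF K hK hKne hπK P hP
    obtain ⟨⟨hC1, hC2, hC3⟩, hExtπ, hExtσ⟩ := hP
    have h3 := hC3 K (h𝒜LA hK) F (h𝒜LA hF) Set.univ h𝒜F.1 Set.univ_nonempty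
      (by rw [Set.inter_univ]; exact hKne)
    rw [Set.inter_univ] at h3
    rw [hExtπ (K ∩ F) (h𝒜L.1.inter_mem hK hF), hExtπ K hK] at h3
    rw [Set.inter_comm F K, h3, mul_div_cancel_left₀ _ (ne_of_gt hπK)]
  -- closed form of the lower envelope
  have closed : ∀ F, F ∈ 𝒜L → ∀ K, K ∈ 𝒜L → K.Nonempty →
      lowEnv Ps F K =
        if 0 < π K then π (F ∩ K) / π K else if F ∩ K = K then 1 else 0 := by
    intro F hF K hK hKne
    have himgne : ((fun P => P F K) '' Ps).Nonempty := hPsne.image _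
    by_cases hπK : 0 < π K
    · rw [if_pos hπK]
      show sInf ((fun P => P F K) '' Ps) = π (F ∩ K) / π K
      apply csInf_of_const himgne
      rintro x ⟨P, hP, rfl⟩
      exact fact2 F hF K hK hKne hπK P hP
    · rw [if_neg hπK]
      have hπK0 : π K = 0 := le_antisymm (not_lt.1 hπK) (hπ.1 _ hK).1
      by_cases hFK : F ∩ K = K
      · rw [if_pos hFK]
        show sInf ((fun P => P F K) '' Ps) = 1
        apply csInf_of_const himgne
        rintro x ⟨P, hP, rfl⟩
        exact fact1 F hF K hK hKne hFK P hP
      · rw [if_neg hFK]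
        -- construct a member with value 0
        have hKF : (K ∩ Fᶜ).Nonempty := by
          rw [Set.nonempty_iff_ne_empty]
          intro hempty
          apply hFK
          apply Set.Subset.antisymm Set.inter_subset_right
          intro x hx
          refine ⟨?_, hx⟩
          by_contra hxF
          exact Set.eq_empty_iff_forall_notMem.1 hempty x ⟨hx, hxF⟩
        have hKFmem : K ∩ Fᶜ ∈ 𝒜L := h𝒜L.1.inter_mem hK (h𝒜L.1.2.1 _ hF)
        obtain ⟨j₀, hj₀⟩ := exists_block_subset h𝒜L hKFmem hKF
        have hj₀K : H j₀ ⊆ K := fun x hx => (hj₀ hx).1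
        have hj₀F : H j₀ ⊆ Fᶜ := fun x hx => (hj₀ hx).2
        set P₁ := Pdef H σ μ (prioSel j₀ (minSel ι)) (minSel Ω) with hP₁def
        have hP₁ : P₁ ∈ Ps :=
          Pdef_mem_FCPSet hH h𝒜L h𝒜F h𝒜LA hπ hσ hμFAP hμπ hμdis hμmono _ _
        have hval : P₁ F K = 0 := by
          have hμK : ¬ 0 < μ K := by
            rw [hμπ _ hK, hπK0]
            exact lt_irrefl 0
          have hj₀mem : j₀ ∈ {j | (H j ∩ K).Nonempty} := by
            obtain ⟨x, hx⟩ := hH.1 j₀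
            exact ⟨x, hx, hj₀K hx⟩
          have hsel : (prioSel j₀ (minSel ι)).sel {j | (H j ∩ K).Nonempty} = j₀ := by
            show (if j₀ ∈ {j | (H j ∩ K).Nonempty} then j₀
              else (minSel ι).sel {j | (H j ∩ K).Nonempty}) = j₀
            rw [if_pos hj₀mem]
          have hσK : 0 < σ K ((prioSel j₀ (minSel ι)).sel {j | (H j ∩ K).Nonempty}) := by
            rw [hsel, (hσ j₀).2 K (h𝒜LA hK) hj₀K]
            norm_num
          have hnum : σ (F ∩ K) ((prioSel j₀ (minSel ι)).sel {j | (H j ∩ K).Nonempty})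
              = 0 := by
            rw [hsel]
            apply sigma_zero_of_disjoint h𝒜F hσ (h𝒜F.inter_mem (h𝒜LA hF) (h𝒜LA hK))
            rw [Set.eq_empty_iff_forall_notMem]
            rintro x ⟨hx1, hx2, -⟩
            exact hj₀F hx1 hx2
          rw [hP₁def]
          show Pdef H σ μ (prioSel j₀ (minSel ι)) (minSel Ω) F K = 0
          rw [Pdef, if_neg hμK, if_pos hσK, hnum, zero_div]
        show sInf ((fun P => P F K) '' Ps) = 0
        have hbdd : BddBelow ((fun P => P F K) '' Ps) := by
          refine ⟨0, ?_⟩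
          rintro x ⟨P, hP, rfl⟩
          exact (fact4 F (h𝒜LA hF) K (h𝒜LA hK) hKne P hP).1
        apply le_antisymm
        · exact csInf_le hbdd ⟨P₁, hP₁, hval⟩
        · apply le_csInf himgne
          rintro x ⟨P, hP, rfl⟩
          exact (fact4 F (h𝒜LA hF) K (h𝒜LA hK) hKne P hP).1
  refine ⟨?_, ?_⟩
  · -- part (i)
    intro K hK hKne
    have hUmem : ∀ {n : ℕ} (A : Fin n → Set Ω), (∀ i, A i ∈ 𝒜L) → (⋃ i, A i) ∈ 𝒜L := by
      intro n A hA
      have he : (⋃ i, A i) = ⋃ i ∈ Finset.univ, A i := by simp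
      rw [he]
      exact biUnion_mem_field h𝒜L.1 _ _ (fun j _ => hA j)
    constructor
    · -- capacity
      refine ⟨?_, ?_, ?_, ?_⟩
      · show lowEnv Ps ∅ K = 0
        rw [closed ∅ h𝒜L.1.empty_mem K hK hKne]
        split_ifs with h1 h2
        · rw [Set.empty_inter, hπ.empty h𝒜L.1, zero_div]
        · exfalso
          rw [Set.empty_inter] at h2
          exact hKne.ne_empty h2.symm
        · rfl
      · show lowEnv Ps Set.univ K = 1
        rw [closed Set.univ h𝒜L.1.1 K hK hKne]
        split_ifs with h1 h2
        · rw [Set.univ_inter, div_self (ne_of_gt h1)]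
        · rfl
        · exact absurd (Set.univ_inter K) h2
      · intro A hA
        show 0 ≤ lowEnv Ps A K ∧ lowEnv Ps A K ≤ 1
        rw [closed A hA K hK hKne]
        split_ifs with h1 h2
        · constructor
          · exact div_nonneg (hπ.1 _ (h𝒜L.1.inter_mem hA hK)).1 h1.le
          · rw [div_le_one h1]
            exact hπ.mono h𝒜L.1 (h𝒜L.1.inter_mem hA hK) hK Set.inter_subset_right
        · norm_num
        · norm_num
      · intro A hA B hB hAB
        show lowEnv Ps A K ≤ lowEnv Ps B K
        rw [closed A hA K hK hKne, closed B hB K hK hKne]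
        split_ifs with h1 h2 h3 h4
        · refine (div_le_div_iff_of_pos_right h1).2 ?_
          exact hπ.mono h𝒜L.1 (h𝒜L.1.inter_mem hA hK) (h𝒜L.1.inter_mem hB hK)
            (Set.inter_subset_inter_left K hAB)
        · exact le_refl 1
        · exfalso
          apply h3
          rw [Set.inter_eq_right] at h2 ⊢
          exact h2.trans hAB
        · norm_num
        · norm_num
    · -- totally monotone
      intro n hn A hA
      show ∑ s ∈ Finset.univ.powerset.filter (fun s : Finset (Fin n) => s.Nonempty),
        (-1 : ℝ) ^ (s.card - 1) * lowEnv Ps (⋂ i ∈ s, A i) K ≤ lowEnv Ps (⋃ i, A i) K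
      have hImem : ∀ {s : Finset (Fin n)}, s.Nonempty → (⋂ i ∈ s, A i) ∈ 𝒜L :=
        fun {s} hs => biInter_mem_field h𝒜L.1 hs A (fun j _ => hA j)
      by_cases hπK : 0 < π K
      · have hconv : ∀ s ∈ Finset.univ.powerset.filter
            (fun s : Finset (Fin n) => s.Nonempty),
            (-1 : ℝ) ^ (s.card - 1) * lowEnv Ps (⋂ i ∈ s, A i) K =
            ((-1 : ℝ) ^ (s.card - 1) * π (⋂ i ∈ s, (A i ∩ K))) / π K := by
          intro s hs
          have hsne : s.Nonempty := (Finset.mem_filter.1 hs).2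
          rw [closed _ (hImem hsne) K hK hKne, if_pos hπK,
            ← biInter_inter_const hsne A K, mul_div_assoc]
        rw [Finset.sum_congr rfl hconv, ← Finset.sum_div,
          closed _ (hUmem A hA) K hK hKne, if_pos hπK, Set.iUnion_inter,
          pi_ie_fin h𝒜L.1 hπ (fun i => A i ∩ K)
            (fun i => h𝒜L.1.inter_mem (hA i) hK)]
      · have hterm : ∀ s ∈ Finset.univ.powerset.filter
            (fun s : Finset (Fin n) => s.Nonempty),
            (-1 : ℝ) ^ (s.card - 1) * lowEnv Ps (⋂ i ∈ s, A i) K =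
            if s ⊆ Finset.univ.filter (fun i : Fin n => K ⊆ A i)
              then (-1 : ℝ) ^ (s.card - 1) else 0 := by
          intro s hs
          have hsne : s.Nonempty := (Finset.mem_filter.1 hs).2
          rw [closed _ (hImem hsne) K hK hKne, if_neg hπK]
          by_cases hsub : s ⊆ Finset.univ.filter (fun i : Fin n => K ⊆ A i)
          · have hKsub : (⋂ i ∈ s, A i) ∩ K = K := by
              rw [Set.inter_eq_right, Set.subset_iInter₂_iff]
              intro i hi
              exact (Finset.mem_filter.1 (hsub hi)).2
            rw [if_pos hsub, if_pos hKsub, mul_one]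
          · rw [if_neg hsub, if_neg, mul_zero]
            intro hcon
            apply hsub
            intro i hi
            rw [Set.inter_eq_right] at hcon
            refine Finset.mem_filter.2 ⟨Finset.mem_univ i, ?_⟩
            exact hcon.trans (Set.biInter_subset_of_mem hi)
        rw [Finset.sum_congr rfl hterm, ← Finset.sum_filter]
        set S := Finset.univ.filter (fun i : Fin n => K ⊆ A i) with hSdef
        have hset : (Finset.univ.powerset.filter
            (fun s : Finset (Fin n) => s.Nonempty)).filter (fun s => s ⊆ S) =
            S.powerset.filter (fun s => s.Nonempty) := by
          ext s
          simp only [Finset.mem_filter, Finset.mem_powerset]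
          constructor
          · rintro ⟨⟨-, h2⟩, h3⟩; exact ⟨h3, h2⟩
          · rintro ⟨h1, h2⟩; exact ⟨⟨Finset.subset_univ s, h2⟩, h1⟩
        rw [hset]
        have hzsum : ∑ s ∈ S.powerset.filter (fun s => s.Nonempty),
            (-1 : ℝ) ^ (s.card - 1) = if S = ∅ then 0 else 1 := by
          have hcast : ∑ s ∈ S.powerset, (-1 : ℝ) ^ s.card =
              if S = ∅ then 1 else 0 := by
            have h := Finset.sum_powerset_neg_one_pow_card (α := Fin n) (x := S)
            have h2 : ((∑ m ∈ S.powerset, (-1 : ℤ) ^ m.card : ℤ) : ℝ) =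
                ((if S = ∅ then 1 else 0 : ℤ) : ℝ) := by exact_mod_cast h
            push_cast at h2
            exact h2
          by_cases hS : S = ∅
          · rw [if_pos hS, hS]
            simp [Finset.filter_singleton]
          · rw [if_neg hS]
            have h1 : ∑ s ∈ S.powerset, (-1 : ℝ) ^ s.card = 0 := by
              rw [hcast, if_neg hS]
            have hsplit := Finset.sum_filter_add_sum_filter_not S.powerset
              (fun s => s.Nonempty) (fun s => (-1 : ℝ) ^ s.card)
            have hnotS : S.powerset.filter (fun s => ¬ s.Nonempty) = {∅} := by
              ext s
              simp only [Finset.mem_filter, Finset.mem_powerset,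
                Finset.not_nonempty_iff_eq_empty, Finset.mem_singleton]
              constructor
              · rintro ⟨-, h⟩; exact h
              · rintro rfl; exact ⟨Finset.empty_subset _, rfl⟩
            rw [hnotS, Finset.sum_singleton, Finset.card_empty, pow_zero] at hsplit
            have hneg : ∑ s ∈ S.powerset.filter (fun s => s.Nonempty),
                (-1 : ℝ) ^ s.card =
                -∑ s ∈ S.powerset.filter (fun s => s.Nonempty),
                  (-1 : ℝ) ^ (s.card - 1) := by
              rw [← Finset.sum_neg_distrib]
              apply Finset.sum_congr rfl
              intro s hs
              have hsne : s.Nonempty := (Finset.mem_filter.1 hs).2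
              obtain ⟨m, hm⟩ : ∃ m, s.card = m + 1 :=
                ⟨s.card - 1, (Nat.succ_pred_eq_of_pos (Finset.card_pos.2 hsne)).symm⟩
              rw [hm, Nat.add_sub_cancel, pow_succ]
              ring
            rw [hneg] at hsplit
            rw [h1] at hsplit
            linarith
        rw [hzsum]
        rw [closed _ (hUmem A hA) K hK hKne, if_neg hπK]
        by_cases hS : S = ∅
        · rw [if_pos hS]
          split_ifs <;> norm_num
        · rw [if_neg hS]
          obtain ⟨i₀, hi₀⟩ := Finset.nonempty_of_ne_empty hS
          have hKA : K ⊆ A i₀ := (Finset.mem_filter.1 hi₀).2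
          rw [if_pos]
          · rw [Set.inter_eq_right]
            exact hKA.trans (Set.subset_iUnion A i₀)
  · -- part (ii)
    intro F hF K hK hKne
    constructor
    · intro hFK
      rw [closed F hF K hK hKne]
      by_cases h1 : 0 < π K
      · rw [if_pos h1, hFK, div_self (ne_of_gt h1)]
      · rw [if_neg h1, if_pos hFK]
    · intro hFK
      constructor
      · intro hπK
        rw [closed F hF K hK hKne, if_pos hπK]
      · intro hπK0
        rw [closed F hF K hK hKne, if_neg (by rw [hπK0]; exact lt_irrefl 0),
          if_neg hFK]
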